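/- arXiv:1504.02969 — 7 statements merged into one kernel-verified Lean document; each statement's English description precedes it below -/
import Mathlib

section
/- Let Q be a measure on ℝ^[0,∞) such that for all a, b > 0 and all measurable B ⊆ ℝ^[0,∞) one has Q(a⁻¹∘B) + Q(b⁻¹∘B) = Q((a+b)⁻¹∘B) (equality in [0,∞]). Then Q(s∘B) = s⁻¹ Q(B) for all s > 0 and all measurable B ⊆ ℝ^[0,∞). -/
open MeasureTheory ProbabilityTheory
open scoped NNReal ENNReal

noncomputable section

/-- Scaling of the time argument: `(s ∘ f)(t) = f (s t)`. -/
def scaleFun (s : ℝ≥0) (f : ℝ≥0 → ℝ) : ℝ≥0 → ℝ := fun t => f (s * t)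

/-- Scaling of a set of paths in `ℝ^[0,∞)`: `s ∘ B = {s ∘ f : f ∈ B}`.
Here `ℝ≥0 → ℝ` carries the cylindrical (product) σ-algebra. -/
def scaleSet (s : ℝ≥0) (B : Set (ℝ≥0 → ℝ)) : Set (ℝ≥0 → ℝ) := scaleFun s '' B

private lemma nnrat_coe_coe (r : ℚ≥0) : ((r : ℝ≥0) : ℝ) = ((r : ℚ) : ℝ) := by
  rw [Rat.cast_nnratCast]
  exact (map_nnratCast NNReal.toRealHom r).symm ▸ rfl

private lemma exists_nnrat_btwn' {x y : ℝ≥0} (h : x < y) :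
    ∃ q : ℚ≥0, x < (q : ℝ≥0) ∧ (q : ℝ≥0) < y := by
  obtain ⟨q, hq1, hq2⟩ := exists_rat_btwn (NNReal.coe_lt_coe.2 h)
  have hq0 : (0:ℚ) ≤ q := by exact_mod_cast le_trans x.coe_nonneg hq1.le
  have key : ((q.toNNRat : ℝ≥0) : ℝ) = (q : ℝ) := by
    rw [nnrat_coe_coe, Rat.coe_toNNRat q hq0]
  exact ⟨q.toNNRat, by rw [← NNReal.coe_lt_coe, key]; exact hq1,
    by rw [← NNReal.coe_lt_coe, key]; exact hq2⟩

private lemma nnrat_pos_of_cast_pos {q : ℚ≥0} (h : (0:ℝ≥0) < (q : ℝ≥0)) : 0 < q :=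
  pos_iff_ne_zero.2 fun hq => by simp [hq] at h

private lemma cauchy_ennreal (g : ℝ≥0 → ℝ≥0∞)
    (hadd : ∀ a b : ℝ≥0, 0 < a → 0 < b → g a + g b = g (a + b))
    (t : ℝ≥0) (ht : 0 < t) : g t = (t : ℝ≥0∞) * g 1 := by
  set c := g 1 with hc
  -- scaling by positive naturals
  have hnat : ∀ n : ℕ, ∀ a : ℝ≥0, 0 < a →
      g (((n : ℕ) + 1 : ℕ) * a) = (((n : ℕ) + 1 : ℕ) : ℝ≥0∞) * g a := by
    intro n
    induction n with
    | zero => intro a ha; simp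
    | succ n ih =>
      intro a ha
      have h1 : ((n + 1 + 1 : ℕ) : ℝ≥0) * a = ((n + 1 : ℕ) : ℝ≥0) * a + a := by
        push_cast; ring
      have h2 : (0:ℝ≥0) < ((n + 1 : ℕ) : ℝ≥0) * a := by positivity
      rw [h1, ← hadd _ _ h2 ha, ih a ha]
      push_cast; ring
  -- monotonicity on positives
  have hmono : ∀ a b : ℝ≥0, 0 < a → a ≤ b → g a ≤ g b := by
    intro a b ha hab
    rcases eq_or_lt_of_le hab with rfl | hlt
    · exact le_rfl
    · have hba : (0:ℝ≥0) < b - a := tsub_pos_of_lt hlt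
      have : g a + g (b - a) = g b := by
        rw [hadd a (b - a) ha hba, add_tsub_cancel_of_le hab]
      calc g a ≤ g a + g (b - a) := le_self_add
        _ = g b := this
  -- values at positive naturals
  have hposnat : ∀ m : ℕ, 0 < m → g ((m : ℝ≥0)) = (m : ℝ≥0∞) * c := by
    intro m hm
    obtain ⟨k, rfl⟩ : ∃ k, m = k + 1 := ⟨m - 1, (Nat.succ_pred_eq_of_pos hm).symm⟩
    have := hnat k 1 one_pos
    simpa using this
  -- values at positive rationals
  have hrat : ∀ q : ℚ≥0, 0 < q → g ((q : ℝ≥0)) = ((q : ℝ≥0) : ℝ≥0∞) * c := by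
    intro q hq
    have hd : 0 < q.den := q.den_pos
    have hn : 0 < q.num := by rw [NNRat.num_pos]; exact hq
    have hq' : (0:ℝ≥0) < (q : ℝ≥0) := by
      rw [← NNReal.coe_pos, nnrat_coe_coe]
      exact_mod_cast hq
    have e1 : ((q.den : ℝ≥0)) * (q : ℝ≥0) = (q.num : ℝ≥0) := by
      rw [NNRat.cast_def]
      field_simp
    have e2 : g ((q.den : ℝ≥0) * (q : ℝ≥0)) = (q.den : ℝ≥0∞) * g ((q : ℝ≥0)) := by
      obtain ⟨k, hk⟩ : ∃ k, q.den = k + 1 := ⟨q.den - 1, (Nat.succ_pred_eq_of_pos hd).symm⟩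
      rw [hk]
      exact_mod_cast hnat k _ hq'
    have e3 : (q.den : ℝ≥0∞) * g ((q : ℝ≥0)) = (q.num : ℝ≥0∞) * c := by
      rw [← e2, e1, hposnat q.num hn]
    have hd0 : ((q.den : ℝ≥0∞)) ≠ 0 := by exact_mod_cast hd.ne'
    have hdT : ((q.den : ℝ≥0∞)) ≠ ∞ := by simp
    have e5 := congrArg (fun x => (q.den : ℝ≥0∞)⁻¹ * x) e3
    simp only [← mul_assoc, ENNReal.inv_mul_cancel hd0 hdT, one_mul] at e5
    have e4 : (((q : ℝ≥0)) : ℝ≥0∞) = (q.den : ℝ≥0∞)⁻¹ * (q.num : ℝ≥0∞) := by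
      rw [NNRat.cast_def, ENNReal.coe_div (by exact_mod_cast hd.ne'),
        ENNReal.div_eq_inv_mul]
      push_cast
      ring
    rw [e5, e4, mul_assoc]
  -- main squeeze
  rcases eq_top_or_lt_top c with hctop | hclt
  · -- c = ∞ : g t = ∞
    obtain ⟨q, hq0, hqt⟩ := exists_nnrat_btwn' ht
    have hqpos : 0 < q := nnrat_pos_of_cast_pos hq0
    have h1 : g ((q : ℝ≥0)) = ⊤ := by
      rw [hrat q hqpos, hctop, ENNReal.mul_top]
      exact_mod_cast hq0.ne'
    have : g t = ⊤ := top_le_iff.mp (h1 ▸ hmono _ t hq0 hqt.le)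
    rw [this, hctop, ENNReal.mul_top (by exact_mod_cast ht.ne')]
  · -- c < ∞
    set cn := c.toNNReal with hcn
    have hcc : c = (cn : ℝ≥0∞) := (ENNReal.coe_toNNReal hclt.ne).symm
    rcases eq_or_ne cn 0 with hcz | hcz
    · -- c = 0 : squeeze from above gives g t = 0
      have hc0 : c = 0 := by rw [hcc, hcz]; rfl
      obtain ⟨q, hq1, _⟩ := exists_nnrat_btwn' (lt_add_of_pos_right t (zero_lt_one' ℝ≥0))
      have hqpos : 0 < q := nnrat_pos_of_cast_pos (ht.trans hq1)
      have hgq : g ((q : ℝ≥0)) = 0 := by rw [hrat q hqpos, hc0, mul_zero]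
      have : g t = 0 := le_antisymm (hgq ▸ hmono t _ ht hq1.le) zero_le
      rw [this, hc0, mul_zero]
    · -- 0 < c < ∞ : two-sided epsilon argument
      refine le_antisymm ?_ ?_
      · -- upper bound
        refine ENNReal.le_of_forall_pos_le_add fun ε hε _ => ?_
        have hδ : (0:ℝ≥0) < ε / cn := by positivity
        obtain ⟨q, hq1, hq2⟩ := exists_nnrat_btwn' (lt_add_of_pos_right t hδ)
        have hqpos : 0 < q := nnrat_pos_of_cast_pos (ht.trans hq1)
        have hδc : ((ε / cn : ℝ≥0) : ℝ≥0∞) * c = (ε : ℝ≥0∞) := by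
          rw [hcc, ← ENNReal.coe_mul, div_mul_cancel₀ _ hcz]
        calc g t ≤ g ((q : ℝ≥0)) := hmono t _ ht hq1.le
          _ = (((q : ℝ≥0)) : ℝ≥0∞) * c := hrat q hqpos
          _ ≤ ((t + ε / cn : ℝ≥0) : ℝ≥0∞) * c :=
              mul_le_mul_left (ENNReal.coe_le_coe.2 hq2.le) c
          _ = (t : ℝ≥0∞) * c + ((ε / cn : ℝ≥0) : ℝ≥0∞) * c := by
              rw [ENNReal.coe_add, add_mul]
          _ = (t : ℝ≥0∞) * c + ε := by rw [hδc]
      · -- lower bound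
        refine ENNReal.le_of_forall_pos_le_add fun ε hε _ => ?_
        set δ := min (t / 2) (ε / cn) with hδdef
        have hδ : (0:ℝ≥0) < δ := lt_min (by positivity) (by positivity)
        have hδt : δ ≤ t := le_trans (min_le_left _ _) (half_le_self zero_le)
        obtain ⟨q, hq1, hq2⟩ := exists_nnrat_btwn' (tsub_lt_self ht hδ)
        have hqpos' : (0:ℝ≥0) < (q : ℝ≥0) := lt_of_le_of_lt zero_le hq1
        have hqpos : 0 < q := nnrat_pos_of_cast_pos hqpos'
        have htle : t ≤ (q : ℝ≥0) + δ := ((tsub_lt_iff_right hδt).1 hq1).le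
        have hδc : ((δ : ℝ≥0) : ℝ≥0∞) * c ≤ (ε : ℝ≥0∞) := by
          rw [hcc, ← ENNReal.coe_mul]
          refine ENNReal.coe_le_coe.2 ?_
          calc δ * cn ≤ (ε / cn) * cn := mul_le_mul_left (min_le_right _ _) cn
            _ = ε := div_mul_cancel₀ _ hcz
        calc (t : ℝ≥0∞) * c ≤ (((q : ℝ≥0) + δ : ℝ≥0) : ℝ≥0∞) * c :=
              mul_le_mul_left (ENNReal.coe_le_coe.2 htle) c
          _ = (((q : ℝ≥0)) : ℝ≥0∞) * c + ((δ : ℝ≥0) : ℝ≥0∞) * c := by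
              rw [ENNReal.coe_add, add_mul]
          _ ≤ g t + ε := add_le_add
              (by rw [← hrat q hqpos]; exact hmono _ t hqpos' hq2.le) hδc

/-- If a measure `Q` on `ℝ^[0,∞)` satisfies
`Q(a⁻¹∘B) + Q(b⁻¹∘B) = Q((a+b)⁻¹∘B)` for all `a, b > 0` and measurable `B`, then
`Q(s∘B) = s⁻¹ Q(B)` for all `s > 0` and measurable `B`. -/
theorem statement2 (Q : Measure (ℝ≥0 → ℝ))
    (h : ∀ a b : ℝ≥0, 0 < a → 0 < b → ∀ B : Set (ℝ≥0 → ℝ), MeasurableSet B →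
      Q (scaleSet a⁻¹ B) + Q (scaleSet b⁻¹ B) = Q (scaleSet (a + b)⁻¹ B)) :
    ∀ s : ℝ≥0, 0 < s → ∀ B : Set (ℝ≥0 → ℝ), MeasurableSet B →
      Q (scaleSet s B) = (s : ℝ≥0∞)⁻¹ * Q B := by
  intro s hs B hB
  have key := cauchy_ennreal (fun a => Q (scaleSet a⁻¹ B))
    (fun a b ha hb => h a b ha hb B hB) s⁻¹ (by positivity)
  simp only [inv_inv, inv_one] at key
  have h1 : scaleSet 1 B = B := by
    have : scaleFun 1 = id := by funext f u; simp [scaleFun]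
    simp [scaleSet, this]
  rw [h1] at key
  rw [key, ENNReal.coe_inv hs.ne']
end
end

section
/- Let σ be a probability measure on D'₀ and define Q(B) = ∫₀^∞ σ(t∘B) dt. Then for every t > 0, ∫ min(1, f(t)²) Q(df) = t · ∫_{D'₀} ∫₀^∞ min(1, g(u)²) u⁻² du σ(dg). In particular, ∫ min(1, f(t)²) Q(df) < ∞ for all t ≥ 0 if and only if ∫_{D'₀} ∫₀^∞ min(1, g(u)²) u⁻² du σ(dg) < ∞. -/
open MeasureTheory ProbabilityTheory
open scoped NNReal ENNReal

noncomputable section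

/-- A function on `[0,∞)` is càdlàg if it is right-continuous everywhere and has left
limits at every positive time. -/
def Cadlag (f : ℝ≥0 → ℝ) : Prop :=
  (∀ t : ℝ≥0, ContinuousWithinAt f (Set.Ici t) t) ∧
  (∀ t : ℝ≥0, 0 < t → ∃ l : ℝ, Filter.Tendsto f (nhdsWithin t (Set.Iio t)) (nhds l))

/-- `D'₀`: the family of càdlàg functions on `[0,∞)` vanishing at the origin and not
identically zero, equipped with the trace of the cylindrical (product) σ-algebra. -/
abbrev Dzero : Type := {f : ℝ≥0 → ℝ // Cadlag f ∧ f 0 = 0 ∧ f ≠ 0}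

/-- Scaling of a set of paths in `D'₀`: `s ∘ B = {s ∘ f : f ∈ B}`. -/
def scaleSetD (s : ℝ≥0) (B : Set Dzero) : Set Dzero :=
  {g : Dzero | ∃ f ∈ B, (g : ℝ≥0 → ℝ) = scaleFun s (f : ℝ≥0 → ℝ)}

lemma scaleFun_comp (a b : ℝ≥0) (f : ℝ≥0 → ℝ) :
    scaleFun a (scaleFun b f) = scaleFun (b * a) f := by
  funext t; simp [scaleFun, mul_assoc]

lemma scaleFun_one (f : ℝ≥0 → ℝ) : scaleFun 1 f = f := by
  funext t; simp [scaleFun]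

lemma scaleFun_mem {s : ℝ≥0} (hs : s ≠ 0) (f : ℝ≥0 → ℝ)
    (hf : Cadlag f ∧ f 0 = 0 ∧ f ≠ 0) :
    Cadlag (scaleFun s f) ∧ scaleFun s f 0 = 0 ∧ scaleFun s f ≠ 0 := by
  have hsp : 0 < s := pos_iff_ne_zero.mpr hs
  refine ⟨⟨fun t => ?_, fun t ht => ?_⟩, by simp [scaleFun, hf.2.1], ?_⟩
  · exact (hf.1.1 (s * t)).comp ((continuous_const.mul continuous_id).continuousWithinAt)
      (fun u hu => mul_le_mul_right hu s)
  · obtain ⟨l, hl⟩ := hf.1.2 (s * t) (mul_pos hsp ht)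
    refine ⟨l, hl.comp ?_⟩
    refine tendsto_nhdsWithin_of_tendsto_nhds_of_eventually_within _
      (((continuous_const.mul continuous_id).tendsto t).mono_left nhdsWithin_le_nhds) ?_
    filter_upwards [self_mem_nhdsWithin] with u hu
    exact mul_lt_mul_of_pos_left hu hsp
  · intro h0
    apply hf.2.2
    funext u
    have := congrFun h0 (s⁻¹ * u)
    simpa [scaleFun, ← mul_assoc, mul_inv_cancel₀ hs] using this

def scaleD (s : ℝ≥0) (f : Dzero) : Dzero :=
  if hs : s = 0 then f else ⟨scaleFun s (f : ℝ≥0 → ℝ), scaleFun_mem hs _ f.2⟩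

lemma scaleD_coe {s : ℝ≥0} (hs : s ≠ 0) (f : Dzero) :
    (scaleD s f : ℝ≥0 → ℝ) = scaleFun s (f : ℝ≥0 → ℝ) := by
  rw [scaleD, dif_neg hs]

lemma scaleD_scaleD_inv {s : ℝ≥0} (hs : s ≠ 0) (f : Dzero) :
    scaleD s (scaleD s⁻¹ f) = f := by
  have hs' : s⁻¹ ≠ 0 := inv_ne_zero hs
  apply Subtype.ext
  rw [scaleD_coe hs, scaleD_coe hs', scaleFun_comp, inv_mul_cancel₀ hs, scaleFun_one]

lemma scaleD_inv_scaleD {s : ℝ≥0} (hs : s ≠ 0) (f : Dzero) :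
    scaleD s⁻¹ (scaleD s f) = f := by
  have hs' : s⁻¹ ≠ 0 := inv_ne_zero hs
  apply Subtype.ext
  rw [scaleD_coe hs', scaleD_coe hs, scaleFun_comp, mul_inv_cancel₀ hs, scaleFun_one]

lemma scaleSetD_eq_preimage {s : ℝ≥0} (hs : s ≠ 0) (B : Set Dzero) :
    scaleSetD s B = scaleD s⁻¹ ⁻¹' B := by
  have hs' : s⁻¹ ≠ 0 := inv_ne_zero hs
  ext g
  constructor
  · rintro ⟨f, hfB, hgf⟩
    have : scaleD s⁻¹ g = f := by
      apply Subtype.ext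
      rw [scaleD_coe hs', hgf, scaleFun_comp, mul_inv_cancel₀ hs, scaleFun_one]
    simpa [Set.mem_preimage, this]
  · intro hg
    refine ⟨scaleD s⁻¹ g, hg, ?_⟩
    rw [scaleD_coe hs', scaleFun_comp, inv_mul_cancel₀ hs, scaleFun_one]

lemma measurable_evalD (u : ℝ≥0) : Measurable fun f : Dzero => (f : ℝ≥0 → ℝ) u :=
  (measurable_pi_apply u).comp measurable_subtype_coe

lemma measurable_scaleD (s : ℝ≥0) : Measurable (scaleD s) := by
  rcases eq_or_ne s 0 with rfl | hs
  · have : scaleD 0 = id := funext fun f => dif_pos rfl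
    rw [this]; exact measurable_id
  · apply Measurable.subtype_mk (p := fun f => Cadlag f ∧ f 0 = 0 ∧ f ≠ 0)
      (f := fun f : Dzero => (scaleD s f : ℝ≥0 → ℝ))
    apply measurable_pi_lambda
    intro u
    have : (fun f : Dzero => (scaleD s f : ℝ≥0 → ℝ) u) = fun f : Dzero => (f : ℝ≥0 → ℝ) (s * u) := by
      funext f; rw [scaleD_coe hs]; rfl
    rw [this]
    exact measurable_evalD _

def dyad (n : ℕ) (u : ℝ≥0) : ℝ≥0 := (⌈u * 2 ^ n⌉₊ : ℝ≥0) / 2 ^ n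

lemma le_dyad (n : ℕ) (u : ℝ≥0) : u ≤ dyad n u := by
  rw [dyad, le_div_iff₀ (by positivity)]
  exact_mod_cast Nat.le_ceil _

lemma dyad_le (n : ℕ) (u : ℝ≥0) : dyad n u ≤ u + (2 ^ n)⁻¹ := by
  rw [dyad, div_le_iff₀ (by positivity)]
  have h := (Nat.ceil_lt_add_one (zero_le : (0 : ℝ≥0) ≤ u * 2 ^ n)).le
  calc (⌈u * 2 ^ n⌉₊ : ℝ≥0) ≤ u * 2 ^ n + 1 := h
    _ = (u + (2 ^ n)⁻¹) * 2 ^ n := by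
        rw [add_mul, inv_mul_cancel₀ (by positivity)]

lemma tendsto_dyad (u : ℝ≥0) :
    Filter.Tendsto (fun n => dyad n u) Filter.atTop (nhdsWithin u (Set.Ici u)) := by
  rw [tendsto_nhdsWithin_iff]
  constructor
  · apply tendsto_of_tendsto_of_tendsto_of_le_of_le (g := fun _ => u)
      (h := fun n => u + ((2 : ℝ≥0) ^ n)⁻¹) tendsto_const_nhds ?_ (le_dyad · u) (dyad_le · u)
    have h2 : Filter.Tendsto (fun n : ℕ => ((2 : ℝ≥0) ^ n)⁻¹) Filter.atTop (nhds 0) := by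
      simp_rw [← inv_pow]
      exact NNReal.tendsto_pow_atTop_nhds_zero_of_lt_one (inv_lt_one_of_one_lt₀ one_lt_two)
    simpa using tendsto_const_nhds.add h2
  · exact Filter.Eventually.of_forall fun n => le_dyad n u

lemma measurable_eval_comp {α : Type*} [MeasurableSpace α] {c : α → ℝ≥0} (hc : Measurable c) :
    Measurable fun p : α × Dzero => (p.2 : ℝ≥0 → ℝ) (c p.1) := by
  have hFn : ∀ n : ℕ, Measurable fun p : α × Dzero => (p.2 : ℝ≥0 → ℝ) (dyad n (c p.1)) := by
    intro n
    have hG : Measurable fun q : Dzero × ℕ => (q.1 : ℝ≥0 → ℝ) ((q.2 : ℝ≥0) / 2 ^ n) :=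
      measurable_from_prod_countable_left fun k => by simpa using measurable_evalD ((k : ℝ≥0) / 2 ^ n)
    have : (fun p : α × Dzero => (p.2 : ℝ≥0 → ℝ) (dyad n (c p.1)))
        = fun p : α × Dzero => (fun q : Dzero × ℕ => (q.1 : ℝ≥0 → ℝ) ((q.2 : ℝ≥0) / 2 ^ n))
            (p.2, ⌈c p.1 * 2 ^ n⌉₊) := by
      funext p; rfl
    rw [this]
    exact hG.comp (measurable_snd.prodMk
      (((hc.comp measurable_fst).mul measurable_const).nat_ceil))
  apply measurable_of_tendsto_metrizable hFn
  rw [tendsto_pi_nhds]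
  intro p
  exact (p.2.2.1.1 (c p.1)).tendsto.comp (tendsto_dyad (c p.1))

/-- The scaling kernel map: for `t > 0` it sends `g` to `t⁻¹ ∘ g`. -/
def scaleKerMap (t : ℝ) (f : Dzero) : Dzero := scaleD (t.toNNReal)⁻¹ f

lemma measurable_scaleKerMap (t : ℝ) : Measurable (scaleKerMap t) :=
  measurable_scaleD _

lemma measurable_scaleKerMap_prod :
    Measurable fun p : ℝ × Dzero => scaleKerMap p.1 p.2 := by
  apply Measurable.subtype_mk (p := fun f => Cadlag f ∧ f 0 = 0 ∧ f ≠ 0)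
    (f := fun p : ℝ × Dzero => (scaleKerMap p.1 p.2 : ℝ≥0 → ℝ))
  apply measurable_pi_lambda
  intro u
  have hval : ∀ p : ℝ × Dzero, (scaleKerMap p.1 p.2 : ℝ≥0 → ℝ) u
      = (p.2 : ℝ≥0 → ℝ) (if (p.1.toNNReal)⁻¹ = 0 then u else (p.1.toNNReal)⁻¹ * u) := by
    rintro ⟨t, f⟩
    by_cases hs : (t.toNNReal)⁻¹ = 0
    · simp only [hs, if_pos, scaleKerMap, scaleD, dif_pos hs, dite_true]
    · simp only [hs, if_neg, scaleKerMap, if_false]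
      rw [scaleD_coe hs]
      rfl
  simp_rw [hval]
  exact measurable_eval_comp
    (Measurable.ite (by exact (measurable_real_toNNReal.inv) (measurableSet_singleton 0))
      measurable_const ((measurable_real_toNNReal.inv).mul_const u))

/-- The scaling kernel. -/
def scaleKer (σ : Measure Dzero) (t : ℝ) : Measure Dzero := σ.map (scaleKerMap t)

lemma measurable_scaleKer (σ : Measure Dzero) [IsProbabilityMeasure σ] :
    Measurable (scaleKer σ) := by
  apply Measure.measurable_of_measurable_coe
  intro s hs
  have h1 : ∀ t : ℝ, scaleKer σ t s = ∫⁻ f, s.indicator (fun _ => (1 : ℝ≥0∞)) (scaleKerMap t f) ∂σ := by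
    intro t
    rw [scaleKer, Measure.map_apply (measurable_scaleKerMap t) hs,
      lintegral_indicator_const_comp (measurable_scaleKerMap t) hs, one_mul]
  simp_rw [h1]
  apply Measurable.lintegral_prod_right
  exact (measurable_const.indicator hs).comp measurable_scaleKerMap_prod

lemma key_calc (σ : Measure Dzero) [IsProbabilityMeasure σ] (Q : Measure Dzero)
    (hQ : ∀ B : Set Dzero, MeasurableSet B →
      Q B = ∫⁻ t in Set.Ioi (0 : ℝ), σ (scaleSetD t.toNNReal B))
    (t₀ : ℝ≥0) (ht₀ : 0 < t₀) :
    ∫⁻ f : Dzero, ENNReal.ofReal (min 1 (((f : ℝ≥0 → ℝ) t₀) ^ 2)) ∂Q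
      = (t₀ : ℝ≥0∞) * ∫⁻ g : Dzero,
          (∫⁻ u in Set.Ioi (0 : ℝ),
            ENNReal.ofReal (min 1 (((g : ℝ≥0 → ℝ) u.toNNReal) ^ 2) / u ^ 2)) ∂σ := by
  have hκ := measurable_scaleKer σ
  -- identify Q with the bind measure
  have hQeq : Q = (volume.restrict (Set.Ioi (0 : ℝ))).bind (scaleKer σ) := by
    ext B hB
    rw [Measure.bind_apply hB hκ.aemeasurable, hQ B hB]
    refine setLIntegral_congr_fun measurableSet_Ioi
      (fun t ht => ?_)
    have hts : t.toNNReal ≠ 0 := (Real.toNNReal_pos.mpr ht).ne'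
    rw [scaleKer, Measure.map_apply (measurable_scaleKerMap t) hB,
      scaleSetD_eq_preimage hts B]
    rfl
  set F : Dzero → ℝ≥0∞ := fun f => ENNReal.ofReal (min 1 (((f : ℝ≥0 → ℝ) t₀) ^ 2)) with hFdef
  have hF : Measurable F :=
    (measurable_const.min ((measurable_evalD t₀).pow_const 2)).ennreal_ofReal
  have step1 : ∫⁻ f, F f ∂Q
      = ∫⁻ t in Set.Ioi (0 : ℝ), ∫⁻ g, F (scaleKerMap t g) ∂σ := by
    rw [hQeq, Measure.lintegral_bind hκ.aemeasurable hF.aemeasurable]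
    exact lintegral_congr fun t => lintegral_map hF (measurable_scaleKerMap t)
  -- the inner integral, rewritten
  set J : ℝ → ℝ≥0∞ := fun t =>
    ∫⁻ g : Dzero, ENNReal.ofReal (min 1 (((g : ℝ≥0 → ℝ) ((t.toNNReal)⁻¹ * t₀)) ^ 2)) ∂σ with hJdef
  have step2 : ∫⁻ t in Set.Ioi (0 : ℝ), ∫⁻ g, F (scaleKerMap t g) ∂σ
      = ∫⁻ t in Set.Ioi (0 : ℝ), J t := by
    refine setLIntegral_congr_fun measurableSet_Ioi
      (fun t ht => ?_)
    refine lintegral_congr fun g => ?_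
    have hts : (t.toNNReal)⁻¹ ≠ 0 := inv_ne_zero (Real.toNNReal_pos.mpr ht).ne'
    simp only [hFdef, scaleKerMap]
    rw [scaleD_coe hts]
    rfl
  -- change of variables `t = t₀ / x`
  have himg : (fun u : ℝ => (t₀ : ℝ) / u) '' Set.Ioi 0 = Set.Ioi 0 := by
    ext y
    constructor
    · rintro ⟨x, hx, rfl⟩
      exact div_pos (by exact_mod_cast ht₀ : (0:ℝ) < t₀) hx
    · intro hy
      refine ⟨(t₀ : ℝ) / y, div_pos (by exact_mod_cast ht₀ : (0:ℝ) < t₀) hy, ?_⟩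
      field_simp
  have hinj : Set.InjOn (fun u : ℝ => (t₀ : ℝ) / u) (Set.Ioi 0) := by
    intro a ha b hb h
    have ht0 : (t₀ : ℝ) ≠ 0 := by exact_mod_cast ht₀.ne'
    have := (div_eq_div_iff (ne_of_gt ha) (ne_of_gt hb)).mp h
    exact mul_left_cancel₀ ht0 (by linarith)
  have hderiv : ∀ x ∈ Set.Ioi (0 : ℝ),
      HasFDerivWithinAt (fun u : ℝ => (t₀ : ℝ) / u)
        ((1 : ℝ →L[ℝ] ℝ).smulRight (-((t₀ : ℝ) / x ^ 2))) (Set.Ioi 0) x := by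
    intro x hx
    have h : HasDerivAt (fun u : ℝ => (t₀ : ℝ) / u) (-((t₀ : ℝ) / x ^ 2)) x := by
      simpa [div_eq_mul_inv, mul_neg] using (hasDerivAt_inv (ne_of_gt hx)).const_mul (t₀ : ℝ)
    exact h.hasDerivWithinAt.hasFDerivWithinAt
  have step3 : ∫⁻ t in Set.Ioi (0 : ℝ), J t
      = ∫⁻ x in Set.Ioi (0 : ℝ),
          ENNReal.ofReal |(-((t₀ : ℝ) / x ^ 2))| * J ((t₀ : ℝ) / x) := by
    have := lintegral_image_eq_lintegral_abs_det_fderiv_mul volume measurableSet_Ioi hderiv hinj J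
    rw [himg] at this
    simpa [ContinuousLinearMap.det_toSpanSingleton] using this
  -- simplify the integrand on `Ioi 0`
  have step4 : ∫⁻ x in Set.Ioi (0 : ℝ),
        ENNReal.ofReal |(-((t₀ : ℝ) / x ^ 2))| * J ((t₀ : ℝ) / x)
      = ∫⁻ x in Set.Ioi (0 : ℝ), (t₀ : ℝ≥0∞) *
          ∫⁻ g : Dzero, ENNReal.ofReal (min 1 (((g : ℝ≥0 → ℝ) x.toNNReal) ^ 2) / x ^ 2) ∂σ := by
    refine setLIntegral_congr_fun measurableSet_Ioi
      (fun x hx => ?_)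
    have hx0 : (0 : ℝ) < x := hx
    have harg : ((((t₀ : ℝ) / x).toNNReal)⁻¹ * t₀ : ℝ≥0) = x.toNNReal := by
      rw [Real.toNNReal_div t₀.coe_nonneg, Real.toNNReal_coe, inv_div,
        div_mul_cancel₀ _ ht₀.ne']
    have habs : |(-((t₀ : ℝ) / x ^ 2))| = (t₀ : ℝ) * (x ^ 2)⁻¹ := by
      rw [abs_neg, abs_of_nonneg (by positivity), div_eq_mul_inv]
    have hJx : J ((t₀ : ℝ) / x)
        = ∫⁻ g : Dzero, ENNReal.ofReal (min 1 (((g : ℝ≥0 → ℝ) x.toNNReal) ^ 2)) ∂σ := by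
      rw [hJdef]
      exact lintegral_congr fun g => by rw [harg]
    rw [habs, hJx, ENNReal.ofReal_mul t₀.coe_nonneg, ENNReal.ofReal_coe_nnreal, mul_assoc]
    congr 1
    rw [← lintegral_const_mul' _ _ ENNReal.ofReal_ne_top]
    refine lintegral_congr fun g => ?_
    rw [← ENNReal.ofReal_mul (by positivity), div_eq_mul_inv, mul_comm]
  -- pull out the constant and apply Tonelli
  rw [step1, step2, step3, step4,
    lintegral_const_mul' _ _ ENNReal.coe_ne_top]
  congr 1
  have hjoint : Measurable fun p : ℝ × Dzero =>
      ENNReal.ofReal (min 1 (((p.2 : ℝ≥0 → ℝ) p.1.toNNReal) ^ 2) / p.1 ^ 2) := by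
    have he : Measurable fun p : ℝ × Dzero => (p.2 : ℝ≥0 → ℝ) p.1.toNNReal :=
      measurable_eval_comp (c := Real.toNNReal) measurable_real_toNNReal
    exact ((measurable_const.min (he.pow_const 2)).div
      ((measurable_fst.pow_const 2))).ennreal_ofReal
  exact (lintegral_lintegral_swap (by exact (hjoint.comp measurable_swap).aemeasurable)).symm

/-- Let `σ` be a probability measure on `D'₀` and let `Q` be the measure with
`Q(B) = ∫₀^∞ σ(t∘B) dt`. Then for every `t > 0`,
`∫ min(1, f(t)²) Q(df) = t · ∫∫ min(1, g(u)²) u⁻² du σ(dg)`; in particular, the left-hand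
side is finite for all `t ≥ 0` iff the double integral is finite. -/
theorem statement3 (σ : Measure Dzero) [IsProbabilityMeasure σ] (Q : Measure Dzero)
    (hQ : ∀ B : Set Dzero, MeasurableSet B →
      Q B = ∫⁻ t in Set.Ioi (0 : ℝ), σ (scaleSetD t.toNNReal B)) :
    (∀ t : ℝ≥0, 0 < t →
      ∫⁻ f : Dzero, ENNReal.ofReal (min 1 (((f : ℝ≥0 → ℝ) t) ^ 2)) ∂Q
        = (t : ℝ≥0∞) * ∫⁻ g : Dzero,
            (∫⁻ u in Set.Ioi (0 : ℝ),
              ENNReal.ofReal (min 1 (((g : ℝ≥0 → ℝ) u.toNNReal) ^ 2) / u ^ 2)) ∂σ) ∧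
    ((∀ t : ℝ≥0, ∫⁻ f : Dzero, ENNReal.ofReal (min 1 (((f : ℝ≥0 → ℝ) t) ^ 2)) ∂Q ≠ ⊤) ↔
      (∫⁻ g : Dzero,
        (∫⁻ u in Set.Ioi (0 : ℝ),
          ENNReal.ofReal (min 1 (((g : ℝ≥0 → ℝ) u.toNNReal) ^ 2) / u ^ 2)) ∂σ) ≠ ⊤) := by
  
  refine ⟨fun t ht => key_calc σ Q hQ t ht, ?_⟩
  constructor
  · intro h
    have h1 := key_calc σ Q hQ 1 one_pos
    rw [ENNReal.coe_one, one_mul] at h1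
    rw [← h1]
    exact h 1
  · intro h t
    rcases eq_or_ne t 0 with rfl | ht
    · have hzero : ∀ f : Dzero, ENNReal.ofReal (min 1 (((f : ℝ≥0 → ℝ) 0) ^ 2)) = 0 := by
        intro f
        rw [f.2.2.1]
        norm_num
      simp only [hzero, lintegral_zero]
      exact ENNReal.zero_ne_top
    · rw [key_calc σ Q hQ t (pos_iff_ne_zero.mpr ht)]
      exact ENNReal.mul_ne_top ENNReal.coe_ne_top h
end
end

section
/- Let τ be a [0,∞]-valued random variable such that for every n ≥ 2, the minimum of n i.i.d. copies of τ has the same distribution as n⁻¹τ. Then τ is exponentially distributed in the extended sense: there exists λ ∈ [0,∞] such that P(τ > t) = e^{−λt} for all t > 0. -/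
open MeasureTheory ProbabilityTheory Filter
open scoped NNReal ENNReal

noncomputable section

/-- If, for every `n ≥ 2`, the minimum of `n` i.i.d. copies of a
`[0,∞]`-valued random variable `τ` (realized on the product space) has the same distribution
as `τ/n`, then `τ` is exponentially distributed in the extended sense: there is
`λ ∈ [0,∞]` with `P(τ > t) = e^{−λt}` for all `t > 0` (where `e^{−∞t} = 0`). -/
theorem statement10 {Ω : Type*} [MeasurableSpace Ω] (P : Measure Ω) [IsProbabilityMeasure P]
    (τ : Ω → ℝ≥0∞) (hmeas : Measurable τ)
    (hmin : ∀ n : ℕ, 2 ≤ n →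
      Measure.map (fun ω : Fin n → Ω => ⨅ j, τ (ω j)) (Measure.pi fun _ : Fin n => P)
        = Measure.map (fun ω => τ ω / (n : ℝ≥0∞)) P) :
    ∃ lam : ℝ≥0∞, ∀ t : ℝ, 0 < t →
      P {ω | ENNReal.ofReal t < τ ω} =
        if lam = ⊤ then 0 else ENNReal.ofReal (Real.exp (-(lam.toReal * t))) := by
  classical
  set F : ℝ → ℝ≥0∞ := fun t => P {ω | ENNReal.ofReal t < τ ω} with hFdef
  have hFanti : ∀ {s t : ℝ}, s ≤ t → F t ≤ F s := by
    intro s t hst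
    exact measure_mono (fun ω h => lt_of_le_of_lt (ENNReal.ofReal_le_ofReal hst) h)
  -- Step A: multiplicative functional equation
  have hA : ∀ n : ℕ, 2 ≤ n → ∀ t : ℝ, 0 ≤ t → F ((n : ℝ) * t) = F t ^ n := by
    intro n hn t ht
    haveI : NeZero n := ⟨by omega⟩
    have h := hmin n hn
    have hmeasInf : Measurable fun ω : Fin n → Ω => ⨅ j, τ (ω j) :=
      Measurable.iInf fun j => hmeas.comp (measurable_pi_apply j)
    have hL := congrArg (fun μ : Measure ℝ≥0∞ => μ (Set.Ioi (ENNReal.ofReal t))) h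
    rw [Measure.map_apply hmeasInf measurableSet_Ioi,
        Measure.map_apply (hmeas.div_const _) measurableSet_Ioi] at hL
    have hsetL : (fun ω : Fin n → Ω => ⨅ j, τ (ω j)) ⁻¹' Set.Ioi (ENNReal.ofReal t)
        = Set.pi Set.univ fun _ : Fin n => τ ⁻¹' Set.Ioi (ENNReal.ofReal t) := by
      ext ω
      simp only [Set.mem_preimage, Set.mem_Ioi, Set.mem_pi, Set.mem_univ, true_implies]
      constructor
      · intro hlt j; exact lt_of_lt_of_le hlt (iInf_le _ j)
      · intro hall
        obtain ⟨j0, hj0⟩ := Finite.exists_min fun j => τ (ω j)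
        have hinf : (⨅ j, τ (ω j)) = τ (ω j0) := le_antisymm (iInf_le _ j0) (le_iInf hj0)
        rw [hinf]; exact hall j0
    have hsetR : (fun ω => τ ω / (n : ℝ≥0∞)) ⁻¹' Set.Ioi (ENNReal.ofReal t)
        = {ω | ENNReal.ofReal ((n : ℝ) * t) < τ ω} := by
      ext ω
      simp only [Set.mem_preimage, Set.mem_Ioi, Set.mem_setOf_eq]
      rw [ENNReal.lt_div_iff_mul_lt (Or.inl (by exact_mod_cast (NeZero.ne n)))
        (Or.inl (ENNReal.natCast_ne_top n))]
      rw [← ENNReal.ofReal_natCast n, ← ENNReal.ofReal_mul ht, mul_comm t (n : ℝ)]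
    rw [hsetL, hsetR, Measure.pi_pi] at hL
    simpa [hFdef, Set.preimage, Set.mem_Ioi] using hL.symm
  have hA1 : ∀ n : ℕ, 1 ≤ n → ∀ t : ℝ, 0 ≤ t → F ((n : ℝ) * t) = F t ^ n := by
    intro n hn t ht
    rcases eq_or_lt_of_le hn with h1 | h2
    · simp [← h1]
    · exact hA n h2 t ht
  set c : ℝ≥0∞ := F 1 with hcdef
  have hc1 : c ≤ 1 := prob_le_one
  have hcm : ∀ m : ℕ, 1 ≤ m → F (m : ℝ) = c ^ m := by
    intro m hm
    have := hA1 m hm 1 zero_le_one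
    simpa using this
  by_cases hc0 : c = 0
  · -- τ = 0 a.s. on (1,∞); in fact F t = 0 for all t > 0
    refine ⟨⊤, fun t ht => ?_⟩
    simp only [if_pos rfl]
    set n : ℕ := ⌈1 / t⌉₊ + 2 with hn
    have hn2 : 2 ≤ n := by omega
    have hnt : (1 : ℝ) ≤ (n : ℝ) * t := by
      have h1 : 1 / t ≤ (n : ℝ) := by
        calc (1 : ℝ) / t ≤ (⌈1 / t⌉₊ : ℝ) := Nat.le_ceil _
        _ ≤ (n : ℝ) := by exact_mod_cast Nat.le_add_right _ 2
      calc (1 : ℝ) = (1 / t) * t := by field_simp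
      _ ≤ (n : ℝ) * t := by exact mul_le_mul_of_nonneg_right h1 ht.le
    have h0 : F t ^ n ≤ 0 := by
      rw [← hA n hn2 t ht.le]
      calc F ((n : ℝ) * t) ≤ F 1 := hFanti hnt
      _ = 0 := hc0
    have : F t = 0 := by
      have := le_antisymm h0 zero_le
      exact pow_eq_zero_iff (by omega) |>.mp this
    exact this
  · -- c > 0
    have hctop : c ≠ ⊤ := (lt_of_le_of_lt hc1 ENNReal.one_lt_top).ne
    set cr : ℝ := c.toReal with hcr
    have hcrpos : 0 < cr := ENNReal.toReal_pos hc0 hctop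
    have hcr1 : cr ≤ 1 := by
      rw [hcr, ← ENNReal.toReal_one]
      exact ENNReal.toReal_mono ENNReal.one_ne_top hc1
    have hlog : Real.log cr ≤ 0 := Real.log_nonpos hcrpos.le hcr1
    refine ⟨ENNReal.ofReal (-(Real.log cr)), fun t ht => ?_⟩
    rw [if_neg ENNReal.ofReal_ne_top, ENNReal.toReal_ofReal (by linarith)]
    have hrw : ∀ x : ℝ, ENNReal.ofReal (Real.exp (-(-(Real.log cr) * x))) = c ^ x := by
      intro x
      rw [neg_mul, neg_neg, ← Real.rpow_def_of_pos hcrpos,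
        ← ENNReal.ofReal_rpow_of_pos hcrpos, hcr, ENNReal.ofReal_toReal hctop]
    rw [hrw]
    -- F q = c ^ q for positive rationals
    have hpowinj : ∀ (a b : ℝ≥0∞) (n : ℕ), 1 ≤ n → a ^ n = b ^ n → a = b := by
      intro a b n hn h
      have hne : (n : ℝ) ≠ 0 := Nat.cast_ne_zero.mpr (by omega)
      have h2 := congrArg (fun x : ℝ≥0∞ => x ^ ((n : ℝ)⁻¹)) h
      simpa [← ENNReal.rpow_natCast, ← ENNReal.rpow_mul,
        mul_inv_cancel₀ hne] using h2
    have hrat : ∀ q : ℚ, 0 < q → F (q : ℝ) = c ^ ((q : ℚ) : ℝ) := by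
      intro q hq
      have hden : 1 ≤ q.den := q.pos
      have hnum : 1 ≤ q.num.toNat := by
        have := Rat.num_pos.mpr hq; omega
      have hqr : (0 : ℝ) < (q : ℝ) := by exact_mod_cast hq
      have h1 : ((q.num.toNat : ℝ)) = (q.num : ℝ) := by
        exact_mod_cast Int.toNat_of_nonneg (Rat.num_pos.mpr hq).le
      have hden0 : ((q.den : ℝ)) ≠ 0 := Nat.cast_ne_zero.mpr q.den_nz
      have hmd : (q : ℝ) * (q.den : ℝ) = (q.num : ℝ) := by
        rw [Rat.cast_def]; field_simp
      have key : F (q : ℝ) ^ q.den = c ^ q.num.toNat := by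
        rw [← hA1 q.den hden (q : ℝ) hqr.le]
        have h2 : (q.den : ℝ) * (q : ℝ) = (q.num.toNat : ℝ) := by
          rw [mul_comm, hmd]; exact h1.symm
        rw [h2, hcm _ hnum]
      have key2 : (c ^ ((q : ℚ) : ℝ)) ^ q.den = c ^ q.num.toNat := by
        rw [← ENNReal.rpow_natCast (c ^ ((q : ℚ) : ℝ)), ← ENNReal.rpow_mul,
          ← ENNReal.rpow_natCast c]
        congr 1
        rw [hmd]; exact h1.symm
      exact hpowinj _ _ q.den hden (key.trans key2.symm)
    -- continuity of x ↦ c ^ x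
    have hcont : Continuous fun x : ℝ => c ^ x := by
      have : (fun x : ℝ => c ^ x)
          = fun x => ENNReal.ofReal (Real.exp (Real.log cr * x)) := by
        funext x
        rw [← Real.rpow_def_of_pos hcrpos, ← ENNReal.ofReal_rpow_of_pos hcrpos,
          hcr, ENNReal.ofReal_toReal hctop]
      rw [this]
      exact ENNReal.continuous_ofReal.comp
        (Real.continuous_exp.comp (continuous_const.mul continuous_id))
    -- upper approximation: rationals q_k ↓ t
    have hub : F t ≥ c ^ t := by
      have hseq : ∀ k : ℕ, ∃ q : ℚ, t < (q : ℝ) ∧ (q : ℝ) < t + 1 / (k + 1) := by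
        intro k
        refine exists_rat_btwn ?_
        have h0 : (0 : ℝ) < 1 / (k + 1) := by positivity
        linarith
      choose u hu1 hu2 using hseq
      have hlim : Tendsto (fun k : ℕ => ((u k : ℚ) : ℝ)) atTop (nhds t) := by
        have hlow : Tendsto (fun _ : ℕ => t) atTop (nhds t) := tendsto_const_nhds
        have hupp : Tendsto (fun k : ℕ => t + 1 / (k + 1 : ℝ)) atTop (nhds t) := by
          have := tendsto_one_div_add_atTop_nhds_zero_nat (𝕜 := ℝ)
          simpa using tendsto_const_nhds.add this
        exact tendsto_of_tendsto_of_tendsto_of_le_of_le hlow hupp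
          (fun k => (hu1 k).le) (fun k => (hu2 k).le)
      have hlim2 : Tendsto (fun k : ℕ => c ^ ((u k : ℚ) : ℝ)) atTop (nhds (c ^ t)) :=
        (hcont.tendsto t).comp hlim
      refine le_of_tendsto' hlim2 fun k => ?_
      rw [← hrat (u k) (by exact_mod_cast ht.trans (hu1 k))]
      exact hFanti (hu1 k).le
    -- lower approximation: rationals q_k ↑ t
    have hlb : F t ≤ c ^ t := by
      have hseq : ∀ k : ℕ, ∃ q : ℚ,
          max (t / 2) (t - 1 / (k + 1)) < (q : ℝ) ∧ (q : ℝ) < t := by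
        intro k
        refine exists_rat_btwn ?_
        rw [max_lt_iff]
        constructor
        · linarith
        · have : (0 : ℝ) < 1 / (k + 1) := by positivity
          linarith
      choose u hu1 hu2 using hseq
      have hupos : ∀ k, (0 : ℝ) < ((u k : ℚ) : ℝ) := fun k =>
        lt_of_le_of_lt (le_max_left _ _) (hu1 k) |>.trans_le' (by linarith)
      have hlim : Tendsto (fun k : ℕ => ((u k : ℚ) : ℝ)) atTop (nhds t) := by
        have hlow : Tendsto (fun k : ℕ => max (t / 2) (t - 1 / (k + 1 : ℝ))) atTop
            (nhds t) := by
          have h1 : Tendsto (fun k : ℕ => t - 1 / (k + 1 : ℝ)) atTop (nhds t) := by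
            have := tendsto_one_div_add_atTop_nhds_zero_nat (𝕜 := ℝ)
            simpa using tendsto_const_nhds.sub this
          have h2 : Tendsto (fun _ : ℕ => t / 2) atTop (nhds (t / 2)) :=
            tendsto_const_nhds
          have := h2.max h1
          rwa [max_eq_right (by linarith)] at this
        exact tendsto_of_tendsto_of_tendsto_of_le_of_le hlow tendsto_const_nhds
          (fun k => (hu1 k).le) (fun k => (hu2 k).le)
      have hlim2 : Tendsto (fun k : ℕ => c ^ ((u k : ℚ) : ℝ)) atTop (nhds (c ^ t)) :=
        (hcont.tendsto t).comp hlim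
      refine ge_of_tendsto' hlim2 fun k => ?_
      rw [← hrat (u k) (by exact_mod_cast hupos k)]
      exact hFanti (hu2 k).le
    exact le_antisymm hlb hub
end
end

section
/- If ξ is a time-stable process, then for every λ ∈ ℝ and all s, t ≥ 0, E exp(iλ ξ(s+t)) = E exp(iλ ξ(s)) · E exp(iλ ξ(t)); moreover there exists a function Ψ : ℝ → ℂ such that E exp(iλ ξ(t)) = exp(−t Ψ(λ)) for all t ≥ 0 and λ ∈ ℝ. -/
open MeasureTheory ProbabilityTheory
open scoped NNReal ENNReal

open Filter Topology

noncomputable section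

/-- helper for real max identity -/
lemma max_sub_max_neg (a : ℝ) : max a 0 - max (-a) 0 = a := by
  rcases le_total a 0 with h | h
  · rw [max_eq_right h, max_eq_left (by linarith)]; ring
  · rw [max_eq_left h, max_eq_right (by linarith)]; ring

/-- key toNNReal identity -/
lemma toNNReal_add_eq (x y : ℝ) :
    (x + y).toNNReal + ((-x).toNNReal + (-y).toNNReal)
      = (-(x + y)).toNNReal + (x.toNNReal + y.toNNReal) := by
  apply NNReal.coe_injective
  push_cast [Real.coe_toNNReal']
  have h1 := max_sub_max_neg (x + y)
  have h2 := max_sub_max_neg x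
  have h3 := max_sub_max_neg y
  linarith

/-- continuous multiplicative function on ℝ is an exponential -/
lemma exp_form_of_real (g : ℝ → ℂ) (hgc : Continuous g) (hg0 : g 0 = 1)
    (hmul : ∀ s t : ℝ, g (s + t) = g s * g t) :
    ∃ k : ℂ, ∀ t : ℝ, g t = Complex.exp (k * t) := by
  -- find a > 0 with Re g ≥ 1/2 on [0, a]
  obtain ⟨ε, hε, hball⟩ : ∃ ε > 0, ∀ u : ℝ, dist u 0 < ε → dist (g u) (g 0) < 1/2 :=
    Metric.tendsto_nhds_nhds.mp (hgc.tendsto 0) (1/2) (by norm_num)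
  set a : ℝ := ε / 2 with ha_def
  have ha : 0 < a := by positivity
  have hre : ∀ u ∈ Set.Icc (0:ℝ) a, (1:ℝ)/2 ≤ (g u).re := by
    intro u hu
    have hd : dist u 0 < ε := by
      rw [Real.dist_eq, sub_zero, abs_of_nonneg hu.1]
      calc u ≤ a := hu.2
      _ < ε := by simp [ha_def]; linarith
    have := hball u hd
    rw [hg0, dist_eq_norm] at this
    have hre' : |(g u - 1).re| ≤ ‖g u - 1‖ := Complex.abs_re_le_norm _
    simp only [Complex.sub_re, Complex.one_re] at hre'
    have := lt_of_le_of_lt hre' this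
    have := abs_lt.mp this
    linarith [this.1]
  set c : ℂ := ∫ u in (0:ℝ)..a, g u with hc_def
  have hgi : ∀ p q : ℝ, IntervalIntegrable g MeasureTheory.volume p q :=
    fun p q => hgc.intervalIntegrable p q
  have hc_re : (a:ℝ)/2 ≤ c.re := by
    have : c.re = ∫ u in (0:ℝ)..a, (g u).re := by
      rw [hc_def]
      rw [show ((∫ u in (0:ℝ)..a, g u)).re = Complex.reCLM (∫ u in (0:ℝ)..a, g u) from rfl]
      rw [← Complex.reCLM.intervalIntegral_comp_comm (hgi 0 a)]
      rfl
    rw [this]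
    have h1 : (∫ _u in (0:ℝ)..a, (1:ℝ)/2) = a/2 := by simp; ring
    rw [← h1]
    apply intervalIntegral.integral_mono_on ha.le
      (intervalIntegrable_const) ((Complex.continuous_re.comp hgc).intervalIntegrable 0 a)
    intro x hx; exact hre x hx
  have hc : c ≠ 0 := by
    intro h
    rw [h] at hc_re
    simp at hc_re
    linarith
  set F : ℝ → ℂ := fun t => ∫ u in (0:ℝ)..t, g u with hF_def
  have hkey : ∀ t : ℝ, c * g t = F (t + a) - F t := by
    intro t
    have h1 : F t + ∫ u in t..(t+a), g u = F (t + a) :=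
      intervalIntegral.integral_add_adjacent_intervals (hgi 0 t) (hgi t (t+a))
    have h2 : (∫ u in t..(t+a), g u) = ∫ u in (0:ℝ)..a, g (t + u) := by
      rw [intervalIntegral.integral_comp_add_left (fun u => g u) t]
      norm_num
    have h3 : (∫ u in (0:ℝ)..a, g (t + u)) = g t * c := by
      rw [hc_def]
      rw [← intervalIntegral.integral_const_mul]
      congr 1; funext u; exact hmul t u
    rw [← h1, h2, h3]; ring
  have hFd : ∀ t : ℝ, HasDerivAt F (g t) t := fun t =>
    (hgc.integral_hasStrictDerivAt 0 t).hasDerivAt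
  set k : ℂ := c⁻¹ * (g a - 1) with hk_def
  have hgd : ∀ t : ℝ, HasDerivAt g (k * g t) t := by
    intro t
    have hd1 : HasDerivAt (fun t : ℝ => F (t + a)) (g (t + a)) t := by
      exact (hFd (t + a)).comp_add_const t a
    have hd2 : HasDerivAt (fun t => c⁻¹ * (F (t + a) - F t)) (c⁻¹ * (g (t+a) - g t)) t :=
      ((hd1.sub (hFd t)).const_mul _)
    have heq : (fun t => c⁻¹ * (F (t + a) - F t)) = g := by
      funext u
      rw [← hkey u]
      field_simp
    rw [heq] at hd2
    convert hd2 using 1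
    have : g (t + a) = g t * g a := by rw [add_comm] at *; rw [← hmul]; ring_nf
    rw [this, hk_def]; ring
  have hconst : ∀ t : ℝ, Complex.exp (-k * t) * g t = 1 := by
    have hu : ∀ t : ℝ, HasDerivAt (fun t : ℝ => Complex.exp (-k * t) * g t) 0 t := by
      intro t
      have he : HasDerivAt (fun t : ℝ => Complex.exp (-k * t)) (-k * Complex.exp (-k * t)) t := by
        have h1 : HasDerivAt (fun t : ℝ => -k * (t:ℂ)) (-k) t := by
          simpa using ((Complex.ofRealCLM.hasDerivAt (x := t)).const_mul (-k))
        simpa [mul_comm] using h1.cexp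
      have := he.mul (hgd t)
      exact this.congr_deriv (by ring)
    have hdiff : Differentiable ℝ (fun t : ℝ => Complex.exp (-k * t) * g t) :=
      fun t => (hu t).differentiableAt
    have hderiv : ∀ t : ℝ, deriv (fun t : ℝ => Complex.exp (-k * t) * g t) t = 0 :=
      fun t => (hu t).deriv
    intro t
    have := is_const_of_deriv_eq_zero hdiff hderiv t 0
    simpa [hg0] using this
  refine ⟨k, fun t => ?_⟩
  have h := hconst t
  have he : Complex.exp (-k * t) ≠ 0 := Complex.exp_ne_zero _
  rw [neg_mul, Complex.exp_neg] at h
  field_simp at h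
  exact h


end

noncomputable section

lemma key_analysis (φ : ℝ≥0 → ℂ) (hφc : Continuous φ) (hφ0 : φ 0 = 1)
    (hpow : ∀ n : ℕ, 2 ≤ n → ∀ t : ℝ≥0, φ ((n : ℝ≥0) * t) = φ t ^ n) :
    (∀ s t : ℝ≥0, φ (s + t) = φ s * φ t) ∧
      ∃ c : ℂ, ∀ t : ℝ≥0, φ t = Complex.exp (-(t : ℝ) * c) := by
  -- powers for all naturals
  have hpow' : ∀ (n : ℕ) (t : ℝ≥0), φ ((n : ℝ≥0) * t) = φ t ^ n := by
    intro n t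
    match n with
    | 0 => simpa using hφ0
    | 1 => simp
    | (m+2) => exact hpow (m+2) (by omega) t
  -- additivity
  have hadd : ∀ s t : ℝ≥0, φ (s + t) = φ s * φ t := by
    intro s t
    -- rational approximations
    have happrox : ∀ s : ℝ≥0, ∃ A : ℕ → ℕ,
        Tendsto (fun k => (A k : ℝ≥0) / ((k:ℝ≥0) + 1)) atTop (𝓝 s) := by
      intro s
      refine ⟨fun k => ⌈s * ((k:ℝ≥0)+1)⌉₊, ?_⟩
      rw [← NNReal.tendsto_coe]
      have hlow : ∀ k : ℕ, (s:ℝ) ≤ ((⌈s * ((k:ℝ≥0)+1)⌉₊ : ℝ≥0) / ((k:ℝ≥0)+1) : ℝ≥0) := by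
        intro k
        push_cast
        rw [le_div_iff₀ (by positivity)]
        calc (s:ℝ) * ((k:ℝ)+1) = ((s * ((k:ℝ≥0)+1) : ℝ≥0) : ℝ) := by push_cast; ring
        _ ≤ (⌈s * ((k:ℝ≥0)+1)⌉₊ : ℝ) := by
            exact_mod_cast NNReal.coe_le_coe.mpr (Nat.le_ceil _)
      have hhigh : ∀ k : ℕ, ((⌈s * ((k:ℝ≥0)+1)⌉₊ : ℝ≥0) / ((k:ℝ≥0)+1) : ℝ≥0)
          ≤ (s:ℝ) + 2 / ((k:ℝ)+1) := by
        intro k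
        push_cast
        rw [div_le_iff₀ (by positivity)]
        have h0 : (⌈s*((k:ℝ≥0)+1)⌉₊ : ℝ≥0) < s*((k:ℝ≥0)+1) + 1 :=
          Nat.ceil_lt_add_one zero_le
        have h1 : (⌈s * ((k:ℝ≥0)+1)⌉₊ : ℝ) < ((s * ((k:ℝ≥0)+1) : ℝ≥0):ℝ) + 1 := by
          exact_mod_cast h0
        push_cast at h1
        have hk : ((k:ℝ)+1) ≠ 0 := by positivity
        rw [add_mul, div_mul_cancel₀ _ hk]
        linarith
      refine tendsto_of_tendsto_of_tendsto_of_le_of_le (g := fun _ : ℕ => (s:ℝ))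
        (h := fun k : ℕ => (s:ℝ) + 2 / ((k:ℝ)+1)) tendsto_const_nhds ?_ hlow hhigh
      have h2 : Tendsto (fun k : ℕ => 2 / ((k:ℝ)+1)) atTop (𝓝 0) := by
        simpa [div_eq_mul_inv] using (tendsto_one_div_add_atTop_nhds_zero_nat (𝕜 := ℝ)).const_mul 2
      simpa using tendsto_const_nhds.add h2
    obtain ⟨A, hA⟩ := happrox s
    obtain ⟨B, hB⟩ := happrox t
    -- the exact identity at rationals
    have hratio : ∀ (a b q : ℕ),
        φ ((a:ℝ≥0)/((q:ℝ≥0)+1) + (b:ℝ≥0)/((q:ℝ≥0)+1))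
          = φ ((a:ℝ≥0)/((q:ℝ≥0)+1)) * φ ((b:ℝ≥0)/((q:ℝ≥0)+1)) := by
      intro a b q
      have hq : ((q:ℝ≥0)+1) ≠ 0 := by positivity
      have h1 : ∀ m : ℕ, (m:ℝ≥0)/((q:ℝ≥0)+1) = (m:ℝ≥0) * (1/((q:ℝ≥0)+1)) := by
        intro m; rw [mul_one_div]
      have h2 : (a:ℝ≥0)/((q:ℝ≥0)+1) + (b:ℝ≥0)/((q:ℝ≥0)+1)
          = ((a+b : ℕ):ℝ≥0) * (1/((q:ℝ≥0)+1)) := by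
        push_cast
        rw [mul_one_div, ← add_div]
      rw [h2, h1, h1, hpow', hpow', hpow', pow_add]
    have h1 : Tendsto (fun k => φ ((A k:ℝ≥0)/((k:ℝ≥0)+1) + (B k:ℝ≥0)/((k:ℝ≥0)+1)))
        atTop (𝓝 (φ (s + t))) :=
      (hφc.tendsto _).comp (hA.add hB)
    have h2 : Tendsto (fun k => φ ((A k:ℝ≥0)/((k:ℝ≥0)+1)) * φ ((B k:ℝ≥0)/((k:ℝ≥0)+1)))
        atTop (𝓝 (φ s * φ t)) :=
      ((hφc.tendsto _).comp hA).mul ((hφc.tendsto _).comp hB)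
    have h3 : (fun k => φ ((A k:ℝ≥0)/((k:ℝ≥0)+1) + (B k:ℝ≥0)/((k:ℝ≥0)+1)))
        = (fun k => φ ((A k:ℝ≥0)/((k:ℝ≥0)+1)) * φ ((B k:ℝ≥0)/((k:ℝ≥0)+1))) := by
      funext k; exact hratio (A k) (B k) k
    rw [h3] at h1
    exact tendsto_nhds_unique h1 h2
  -- nonvanishing
  have hne : ∀ t : ℝ≥0, φ t ≠ 0 := by
    intro t ht
    have hz : ∀ k : ℕ, φ (t / 2^k) = 0 := by
      intro k
      induction k with
      | zero => simpa using ht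
      | succ m ih =>
        have hsplit : t / 2^m = t / 2^(m+1) + t / 2^(m+1) := by
          rw [← two_mul]
          rw [pow_succ]
          rw [div_mul_eq_div_div]
          rw [mul_div_cancel₀]
          exact two_ne_zero
        rw [hsplit, hadd] at ih
        rcases mul_eq_zero.mp ih with h | h <;> exact h
    have hlim : Tendsto (fun k : ℕ => t / 2^k) atTop (𝓝 0) := by
      have : Tendsto (fun k : ℕ => ((1:ℝ≥0)/2)^k) atTop (𝓝 0) :=
        NNReal.tendsto_pow_atTop_nhds_zero_of_lt_one ((div_lt_one (by norm_num : (0:ℝ≥0) < 2)).mpr one_lt_two)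
      have h2 := this.const_mul t
      simp only [mul_zero] at h2
      have hfun : (fun k : ℕ => t / 2^k) = fun k : ℕ => t * ((1:ℝ≥0)/2)^k := by
        funext k
        rw [one_div, inv_pow, div_eq_mul_inv]
      rw [hfun]
      exact h2
    have := (hφc.tendsto 0).comp hlim
    rw [hφ0] at this
    have h0 : Tendsto (fun _ : ℕ => (0:ℂ)) atTop (𝓝 (1:ℂ)) := by
      convert this using 1
      funext k; rw [← hz k]; rfl
    have := tendsto_nhds_unique h0 tendsto_const_nhds
    exact one_ne_zero (α := ℂ) this
  refine ⟨hadd, ?_⟩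
  -- extend to ℝ
  set g : ℝ → ℂ := fun x => φ x.toNNReal * (φ (-x).toNNReal)⁻¹ with hg_def
  have hgc : Continuous g := by
    apply Continuous.mul (hφc.comp continuous_real_toNNReal)
    exact ((hφc.comp (continuous_real_toNNReal.comp continuous_neg)).inv₀
      (fun x => hne _))
  have hg0 : g 0 = 1 := by simp [hg_def, hφ0]
  have hgmul : ∀ x y : ℝ, g (x + y) = g x * g y := by
    intro x y
    have key : φ ((x+y).toNNReal) * (φ ((-x).toNNReal) * φ ((-y).toNNReal))
        = φ ((-(x+y)).toNNReal) * (φ (x.toNNReal) * φ (y.toNNReal)) := by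
      rw [← hadd, ← hadd, ← hadd, ← hadd, toNNReal_add_eq]
    have n1 : φ ((-(x+y)).toNNReal) ≠ 0 := hne _
    have n2 : φ ((-x).toNNReal) ≠ 0 := hne _
    have n3 : φ ((-y).toNNReal) ≠ 0 := hne _
    simp only [hg_def, ← div_eq_mul_inv]
    rw [div_mul_div_comm, div_eq_div_iff n1 (mul_ne_zero n2 n3)]
    linear_combination key
  obtain ⟨k, hk⟩ := exp_form_of_real g hgc hg0 hgmul
  refine ⟨-k, fun t => ?_⟩
  have hgt : g (t : ℝ) = φ t := by
    simp only [hg_def]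
    rw [Real.toNNReal_coe]
    rw [show (-(t:ℝ)).toNNReal = 0 from Real.toNNReal_of_nonpos (neg_nonpos.mpr t.coe_nonneg)]
    rw [hφ0]; simp
  rw [← hgt, hk]
  congr 1
  ring

end

noncomputable section

def cf {Ω : Type*} [MeasurableSpace Ω] (P : Measure Ω) (ξ : Ω → ℝ≥0 → ℝ)
    (lam : ℝ) (t : ℝ≥0) : ℂ :=
  ∫ ω, Complex.exp (Complex.I * (lam : ℂ) * (ξ ω t : ℂ)) ∂P

lemma norm_cexp_I_mul (lam x : ℝ) :
    ‖Complex.exp (Complex.I * (lam : ℂ) * (x : ℂ))‖ = 1 := by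
  rw [Complex.norm_exp]
  simp [Complex.mul_re, Complex.mul_im]

lemma meas_cexp_I_mul {Ω : Type*} [MeasurableSpace Ω] {X : Ω → ℝ} (hX : Measurable X)
    (lam : ℝ) : Measurable fun ω => Complex.exp (Complex.I * (lam : ℂ) * (X ω : ℂ)) :=
  Complex.measurable_exp.comp (measurable_const.mul (Complex.measurable_ofReal.comp hX))

lemma integrable_cexp_I_mul {Ω : Type*} [MeasurableSpace Ω] (P : Measure Ω)
    [IsProbabilityMeasure P] {X : Ω → ℝ} (hX : Measurable X) (lam : ℝ) :
    Integrable (fun ω => Complex.exp (Complex.I * (lam : ℂ) * (X ω : ℂ))) P :=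
  Integrable.mono' (integrable_const 1) (meas_cexp_I_mul hX lam).aestronglyMeasurable
    (ae_of_all _ fun ω => le_of_eq (norm_cexp_I_mul lam (X ω)))

lemma pi_int {Ω : Type*} [MeasurableSpace Ω] (P : Measure Ω) [IsProbabilityMeasure P]
    (n : ℕ) (f : Ω → ℂ) :
    ∫ ω, ∏ j : Fin n, f (ω j) ∂(Measure.pi fun _ : Fin n => P) = (∫ ω, f ω ∂P) ^ n := by
  letI : MeasureSpace Ω := ⟨P⟩
  haveI : SigmaFinite (volume : Measure Ω) := inferInstanceAs (SigmaFinite P)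
  simpa using MeasureTheory.integral_fintype_prod_eq_pow (ι := Fin n) f

variable {Ω : Type*} [MeasurableSpace Ω] (P : Measure Ω) [IsProbabilityMeasure P]
  (ξ : Ω → ℝ≥0 → ℝ)

/-- Time stability gives the power identity for characteristic functions. -/
lemma cf_pow (hmeas : ∀ t : ℝ≥0, Measurable fun ω => ξ ω t)
    (hts : ∀ n : ℕ, 2 ≤ n →
      ∀ (k : ℕ) (tt : Fin k → ℝ≥0),
        Measure.map (fun (ω : Fin n → Ω) i => ∑ j, ξ (ω j) (tt i))
            (Measure.pi fun _ : Fin n => P)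
          = Measure.map (fun ω i => ξ ω ((n : ℝ≥0) * tt i)) P)
    (lam : ℝ) (n : ℕ) (hn : 2 ≤ n) (t : ℝ≥0) :
    cf P ξ lam ((n : ℝ≥0) * t) = (cf P ξ lam t) ^ n := by
  have h := hts n hn 1 (fun _ => t)
  set Pi : Measure (Fin n → Ω) := Measure.pi fun _ : Fin n => P with hPi
  haveI : IsProbabilityMeasure Pi := by
    rw [hPi]; infer_instance
  set G : (Fin 1 → ℝ) → ℂ := fun v => Complex.exp (Complex.I * (lam : ℂ) * (v 0 : ℂ))
    with hG
  have hGc : Continuous G := by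
    apply Complex.continuous_exp.comp
    exact (continuous_const.mul (Complex.continuous_ofReal.comp (continuous_apply 0)))
  have hm1 : Measurable fun (ω : Fin n → Ω) (i : Fin 1) => ∑ j, ξ (ω j) t := by
    apply measurable_pi_lambda
    intro _
    exact Finset.measurable_sum _ fun j _ => (hmeas t).comp (measurable_pi_apply j)
  have hm2 : Measurable fun (ω : Ω) (i : Fin 1) => ξ ω ((n : ℝ≥0) * t) := by
    apply measurable_pi_lambda
    intro _
    exact hmeas _
  have e2 : cf P ξ lam ((n : ℝ≥0) * t) = ∫ v, G v ∂(Measure.map (fun ω i => ξ ω ((n : ℝ≥0) * t)) P) := by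
    rw [integral_map hm2.aemeasurable hGc.aestronglyMeasurable]
    rfl
  have e1 : (∫ v, G v ∂(Measure.map (fun (ω : Fin n → Ω) (i : Fin 1) => ∑ j, ξ (ω j) t) Pi))
      = ∫ ω : Fin n → Ω, Complex.exp (Complex.I * (lam : ℂ) * ((∑ j, ξ (ω j) t : ℝ) : ℂ)) ∂Pi := by
    rw [integral_map hm1.aemeasurable hGc.aestronglyMeasurable]
  have e3 : (∫ ω : Fin n → Ω, Complex.exp (Complex.I * (lam : ℂ) * ((∑ j, ξ (ω j) t : ℝ) : ℂ)) ∂Pi)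
      = (cf P ξ lam t) ^ n := by
    have hsplit : ∀ ω : Fin n → Ω,
        Complex.exp (Complex.I * (lam : ℂ) * ((∑ j, ξ (ω j) t : ℝ) : ℂ))
          = ∏ j, Complex.exp (Complex.I * (lam : ℂ) * (ξ (ω j) t : ℂ)) := by
      intro ω
      rw [← Complex.exp_sum]
      congr 1
      push_cast
      rw [Finset.mul_sum]
    simp_rw [hsplit]
    rw [hPi]
    simp only [cf]
    exact pi_int P n (fun ω => Complex.exp (Complex.I * (lam:ℂ) * (ξ ω t : ℂ)))
  rw [e2, ← h]
  rw [show (fun (ω : Fin n → Ω) (i : Fin 1) => ∑ j, ξ (ω j) ((fun _ : Fin 1 => t) i))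
      = (fun (ω : Fin n → Ω) (i : Fin 1) => ∑ j, ξ (ω j) t) from rfl] at *
  rw [e1, e3]

/-- continuity of the characteristic function in time (from stochastic continuity) -/
lemma cf_cont (hmeas : ∀ t : ℝ≥0, Measurable fun ω => ξ ω t)
    (hcont : ∀ t : ℝ≥0, TendstoInMeasure P (fun s ω => ξ ω s) (nhds t) (fun ω => ξ ω t))
    (lam : ℝ) : Continuous (cf P ξ lam) := by
  rw [continuous_iff_continuousAt]
  intro t
  apply tendsto_of_subseq_tendsto
  intro ns hns
  have htm : TendstoInMeasure P (fun k ω => ξ ω (ns k)) atTop (fun ω => ξ ω t) :=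
    fun ε hε => (hcont t ε hε).comp hns
  obtain ⟨ms, -, hae⟩ := htm.exists_seq_tendsto_ae
  refine ⟨ms, ?_⟩
  apply tendsto_integral_of_dominated_convergence (fun _ => (1:ℝ))
  · intro k
    exact (meas_cexp_I_mul (hmeas _) lam).aestronglyMeasurable
  · exact integrable_const 1
  · intro k
    exact ae_of_all _ fun ω => le_of_eq (norm_cexp_I_mul lam _)
  · filter_upwards [hae] with ω hω
    have hc : Continuous fun x : ℝ => Complex.exp (Complex.I * (lam : ℂ) * (x : ℂ)) :=
      Complex.continuous_exp.comp (continuous_const.mul Complex.continuous_ofReal)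
    exact (hc.tendsto _).comp hω

/-- value at time 0 is 1 -/
lemma cf_zero_eq_one (hmeas : ∀ t : ℝ≥0, Measurable fun ω => ξ ω t)
    (hts : ∀ n : ℕ, 2 ≤ n →
      ∀ (k : ℕ) (tt : Fin k → ℝ≥0),
        Measure.map (fun (ω : Fin n → Ω) i => ∑ j, ξ (ω j) (tt i))
            (Measure.pi fun _ : Fin n => P)
          = Measure.map (fun ω i => ξ ω ((n : ℝ≥0) * tt i)) P)
    (lam : ℝ) : cf P ξ lam 0 = 1 := by
  have hsq : ∀ l : ℝ, cf P ξ l 0 = (cf P ξ l 0) ^ 2 := by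
    intro l
    have := cf_pow P ξ hmeas hts l 2 le_rfl 0
    rwa [mul_zero] at this
  have hGc : Continuous fun l : ℝ => cf P ξ l 0 := by
    apply continuous_of_dominated (bound := fun _ => (1:ℝ))
    · intro l
      exact (meas_cexp_I_mul (hmeas 0) l).aestronglyMeasurable
    · intro l
      exact ae_of_all _ fun ω => le_of_eq (norm_cexp_I_mul l _)
    · exact integrable_const 1
    · apply ae_of_all
      intro ω
      apply Complex.continuous_exp.comp
      exact (continuous_const.mul Complex.continuous_ofReal).mul continuous_const
  have hG0 : cf P ξ (0:ℝ) 0 = 1 := by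
    simp only [cf, Complex.ofReal_zero, mul_zero, zero_mul, Complex.exp_zero]
    simp
  have hdich : ∀ l : ℝ, cf P ξ l 0 = 0 ∨ cf P ξ l 0 = 1 := by
    intro l
    have h : cf P ξ l 0 * (cf P ξ l 0 - 1) = 0 := by linear_combination -(hsq l)
    rcases mul_eq_zero.mp h with h | h
    · exact Or.inl h
    · right; linear_combination h
  have hS_eq : {l : ℝ | cf P ξ l 0 = 1}
      = (fun l : ℝ => cf P ξ l 0) ⁻¹' (Metric.ball (1:ℂ) 2⁻¹) := by
    ext l
    simp only [Set.mem_setOf_eq, Set.mem_preimage, Metric.mem_ball, dist_eq_norm]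
    constructor
    · intro h; rw [h]; norm_num
    · intro h
      rcases hdich l with h0 | h1
      · rw [h0] at h; norm_num at h
      · exact h1
  have hclopen : IsClopen {l : ℝ | cf P ξ l 0 = 1} := by
    constructor
    · exact isClosed_eq hGc continuous_const
    · rw [hS_eq]
      exact hGc.isOpen_preimage _ Metric.isOpen_ball
  have huniv : {l : ℝ | cf P ξ l 0 = 1} = Set.univ :=
    hclopen.eq_univ ⟨0, hG0⟩
  have : lam ∈ {l : ℝ | cf P ξ l 0 = 1} := by rw [huniv]; trivial
  exact this

end

noncomputable section

/-- Equality of finite-dimensional distributions. -/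
def EqFDD {Ω Ω' : Type*} [MeasurableSpace Ω] [MeasurableSpace Ω']
    (P : Measure Ω) (P' : Measure Ω') (ξ : Ω → ℝ≥0 → ℝ) (η : Ω' → ℝ≥0 → ℝ) : Prop :=
  ∀ (k : ℕ) (t : Fin k → ℝ≥0),
    Measure.map (fun ω i => ξ ω (t i)) P = Measure.map (fun ω i => η ω (t i)) P'

/-- Time stability: for every `n ≥ 2` the sum of `n` i.i.d. copies of `ξ` (realized on the
product space) has the same finite-dimensional distributions as the time-scaled process
`(n∘ξ)(t) = ξ(nt)`. -/
def TimeStable {Ω : Type*} [MeasurableSpace Ω] (P : Measure Ω) (ξ : Ω → ℝ≥0 → ℝ) : Prop :=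
  ∀ n : ℕ, 2 ≤ n →
    EqFDD (Measure.pi fun _ : Fin n => P) P
      (fun ω t => ∑ j, ξ (ω j) t) (fun ω t => ξ ω ((n : ℝ≥0) * t))

/-- Stochastic continuity: `ξ(s) → ξ(t)` in probability as `s → t`. -/
def StochContinuous {Ω : Type*} [MeasurableSpace Ω] (P : Measure Ω) (ξ : Ω → ℝ≥0 → ℝ) : Prop :=
  ∀ t : ℝ≥0, TendstoInMeasure P (fun s ω => ξ ω s) (nhds t) (fun ω => ξ ω t)

/-- If `ξ` is a (stochastically continuous) time-stable process, then its
characteristic functions satisfy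
`E exp(iλ ξ(s+t)) = E exp(iλ ξ(s)) · E exp(iλ ξ(t))`, and there is `Ψ : ℝ → ℂ` with
`E exp(iλ ξ(t)) = exp(−t Ψ(λ))` for all `t ≥ 0`, `λ ∈ ℝ`. -/
theorem statement11 {Ω : Type*} [MeasurableSpace Ω] (P : Measure Ω) [IsProbabilityMeasure P]
    (ξ : Ω → ℝ≥0 → ℝ) (hmeas : ∀ t : ℝ≥0, Measurable fun ω => ξ ω t)
    (hcont : StochContinuous P ξ) (hts : TimeStable P ξ) :
    (∀ (lam : ℝ) (s t : ℝ≥0),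
      ∫ ω, Complex.exp (Complex.I * (lam : ℂ) * (ξ ω (s + t) : ℂ)) ∂P
        = (∫ ω, Complex.exp (Complex.I * (lam : ℂ) * (ξ ω s : ℂ)) ∂P)
          * ∫ ω, Complex.exp (Complex.I * (lam : ℂ) * (ξ ω t : ℂ)) ∂P) ∧
    ∃ Ψ : ℝ → ℂ, ∀ (lam : ℝ) (t : ℝ≥0),
      ∫ ω, Complex.exp (Complex.I * (lam : ℂ) * (ξ ω t : ℂ)) ∂P
        = Complex.exp (-(t : ℝ) * Ψ lam) := by
  have hpow : ∀ (lam : ℝ) (n : ℕ), 2 ≤ n → ∀ t : ℝ≥0,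
      cf P ξ lam ((n : ℝ≥0) * t) = (cf P ξ lam t) ^ n :=
    fun lam n hn t => cf_pow P ξ hmeas hts lam n hn t
  have hzero : ∀ lam : ℝ, cf P ξ lam 0 = 1 :=
    fun lam => cf_zero_eq_one P ξ hmeas hts lam
  have hc : ∀ lam : ℝ, Continuous (cf P ξ lam) :=
    fun lam => cf_cont P ξ hmeas hcont lam
  have key : ∀ lam : ℝ, (∀ s t : ℝ≥0, cf P ξ lam (s + t) = cf P ξ lam s * cf P ξ lam t) ∧
      ∃ c : ℂ, ∀ t : ℝ≥0, cf P ξ lam t = Complex.exp (-(t : ℝ) * c) :=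
    fun lam => key_analysis (cf P ξ lam) (hc lam) (hzero lam) (fun n hn t => hpow lam n hn t)
  constructor
  · intro lam s t
    exact (key lam).1 s t
  · refine ⟨fun lam => Classical.choose ((key lam).2), fun lam t => ?_⟩
    exact Classical.choose_spec ((key lam).2) t
end
end

section
/- Let ξ be a time-stable process with ξ(t) ≥ 0 almost surely for every t ≥ 0. Then the one-dimensional distributions of ξ are increasing in the stochastic order: for all 0 ≤ s ≤ t and every x ∈ ℝ, P(ξ(s) > x) ≤ P(ξ(t) > x). -/
open MeasureTheory ProbabilityTheory
open scoped NNReal ENNReal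

noncomputable section

section Aux

variable {Ω : Type*} [MeasurableSpace Ω] (P : Measure Ω) [IsProbabilityMeasure P]

lemma map_restrict_pi {m n : ℕ} (h : m ≤ n) :
    Measure.map (fun ω : Fin n → Ω => fun j : Fin m => ω (Fin.castLE h j))
      (Measure.pi fun _ : Fin n => P) = Measure.pi fun _ : Fin m => P := by
  refine (Measure.pi_eq fun s hs => ?_).symm
  rw [Measure.map_apply (measurable_pi_lambda (fun (ω : Fin n → Ω) (j : Fin m) => ω (Fin.castLE h j)) fun j => measurable_pi_apply _)
      (MeasurableSet.univ_pi fun j => hs j)]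
  have hset : (fun ω : Fin n → Ω => fun j : Fin m => ω (Fin.castLE h j)) ⁻¹'
      Set.pi Set.univ s
      = Set.pi Set.univ (fun i : Fin n =>
          if h2 : (i : ℕ) < m then s ⟨i, h2⟩ else Set.univ) := by
    ext ω
    simp only [Set.mem_preimage, Set.mem_pi, Set.mem_univ, forall_true_left]
    constructor
    · intro H i
      by_cases h2 : (i : ℕ) < m
      · simpa [h2] using H ⟨i, h2⟩
      · simp [h2]
    · intro H j
      have := H (Fin.castLE h j)
      simpa [j.isLt] using this
  rw [hset, Measure.pi_pi]
  have h1 : ∀ i : Fin n,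
      P (if h2 : (i : ℕ) < m then s ⟨i, h2⟩ else Set.univ)
      = (fun k : ℕ => if h2 : k < m then P (s ⟨k, h2⟩) else 1) (i : ℕ) := by
    intro i; by_cases h2 : (i : ℕ) < m <;> simp [h2]
  calc ∏ i : Fin n, P (if h2 : (i : ℕ) < m then s ⟨i, h2⟩ else Set.univ)
      = ∏ i : Fin n, (fun k : ℕ => if h2 : k < m then P (s ⟨k, h2⟩) else 1) (i : ℕ) :=
        Finset.prod_congr rfl fun i _ => h1 i
    _ = ∏ k ∈ Finset.range n, (fun k : ℕ => if h2 : k < m then P (s ⟨k, h2⟩) else 1) k :=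
        Fin.prod_univ_eq_prod_range (fun k : ℕ => if h2 : k < m then P (s ⟨k, h2⟩) else 1) n
    _ = ∏ k ∈ Finset.range m, (fun k : ℕ => if h2 : k < m then P (s ⟨k, h2⟩) else 1) k := by
        refine (Finset.prod_subset (Finset.range_subset_range.2 h) fun k _ hk => ?_).symm
        rw [Finset.mem_range, not_lt] at hk
        simp [Nat.not_lt.2 hk]
    _ = ∏ j : Fin m, P (s j) := by
        rw [← Fin.prod_univ_eq_prod_range]
        refine Finset.prod_congr rfl fun j _ => ?_
        simp [j.isLt]

lemma ae_pi_coord {n : ℕ} (j : Fin n) {Q : Ω → Prop} (hQ : MeasurableSet {a | Q a})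
    (h : ∀ᵐ a ∂P, Q a) :
    ∀ᵐ ω ∂(Measure.pi fun _ : Fin n => P), Q (ω j) := by
  rw [ae_iff] at h ⊢
  have hset : {ω : Fin n → Ω | ¬ Q (ω j)}
      = Set.pi Set.univ (fun i : Fin n => if i = j then {a | ¬ Q a} else Set.univ) := by
    ext ω
    simp only [Set.mem_setOf_eq, Set.mem_pi, Set.mem_univ, forall_true_left]
    constructor
    · intro H i
      by_cases h2 : i = j
      · subst h2; simpa using H
      · simp [h2]
    · intro H
      simpa using H j
  rw [hset, Measure.pi_pi]
  refine Finset.prod_eq_zero (Finset.mem_univ j) ?_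
  simpa using h

variable {ξ : Ω → ℝ≥0 → ℝ}

lemma law_sum (hmeas : ∀ t : ℝ≥0, Measurable fun ω => ξ ω t) (hts : TimeStable P ξ)
    (n : ℕ) (hn : 1 ≤ n) (u : ℝ≥0) :
    Measure.map (fun ω : Fin n → Ω => ∑ j, ξ (ω j) u) (Measure.pi fun _ : Fin n => P)
      = Measure.map (fun ω => ξ ω ((n : ℝ≥0) * u)) P := by
  rcases eq_or_lt_of_le hn with h1 | h2
  · -- n = 1
    subst_eqs
    have hfeq : (fun ω : Fin 1 → Ω => ∑ j, ξ (ω j) u)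
        = (fun a : Ω => ξ a u) ∘ (MeasurableEquiv.funUnique (Fin 1) Ω) := by
      funext ω
      simp [Fin.sum_univ_one, MeasurableEquiv.funUnique]
    erw [hfeq, ← Measure.map_map (hmeas u) (MeasurableEquiv.funUnique (Fin 1) Ω).measurable,
      (measurePreserving_funUnique P (Fin 1)).map_eq]
    norm_num
  · -- n ≥ 2
    have h := hts n h2 1 (fun _ => u)
    have hsum_meas : Measurable (fun ω : Fin n → Ω => fun _ : Fin 1 => ∑ j, ξ (ω j) u) :=
      measurable_pi_lambda _ fun _ =>
        Finset.measurable_sum _ fun j _ => (hmeas u).comp (measurable_pi_apply j)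
    have hval_meas : Measurable (fun ω : Ω => fun _ : Fin 1 => ξ ω ((n : ℝ≥0) * u)) :=
      measurable_pi_lambda _ fun _ => hmeas _
    have := congrArg (Measure.map (fun f : Fin 1 → ℝ => f 0)) h
    rwa [Measure.map_map (measurable_pi_apply 0) hsum_meas,
      Measure.map_map (measurable_pi_apply 0) hval_meas] at this

lemma mono_step (hmeas : ∀ t : ℝ≥0, Measurable fun ω => ξ ω t) (hts : TimeStable P ξ)
    (hpos : ∀ t : ℝ≥0, ∀ᵐ ω ∂P, 0 ≤ ξ ω t)
    {m n : ℕ} (hm : 1 ≤ m) (hmn : m ≤ n) (u : ℝ≥0) (x : ℝ) :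
    P {ω | x < ξ ω ((m : ℝ≥0) * u)} ≤ P {ω | x < ξ ω ((n : ℝ≥0) * u)} := by
  have hn : 1 ≤ n := hm.trans hmn
  set μn : Measure (Fin n → Ω) := Measure.pi fun _ => P with hμn
  have hA_meas : Measurable (fun ω : Fin n → Ω => ∑ j, ξ (ω j) u) :=
    Finset.measurable_sum _ fun j _ => (hmeas u).comp (measurable_pi_apply j)
  have hB_meas : Measurable (fun ω : Fin n → Ω => ∑ j : Fin m, ξ (ω (Fin.castLE hmn j)) u) :=
    Finset.measurable_sum _ fun j _ => (hmeas u).comp (measurable_pi_apply _)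
  have hA : P {ω | x < ξ ω ((n : ℝ≥0) * u)} = μn {ω | x < ∑ j, ξ (ω j) u} := by
    have h1 : P {ω | x < ξ ω ((n : ℝ≥0) * u)}
        = Measure.map (fun ω => ξ ω ((n : ℝ≥0) * u)) P (Set.Ioi x) := by
      rw [Measure.map_apply (hmeas _) measurableSet_Ioi]; rfl
    rw [h1, ← law_sum P hmeas hts n hn u,
      Measure.map_apply hA_meas measurableSet_Ioi]
    rfl
  have hB : P {ω | x < ξ ω ((m : ℝ≥0) * u)}
      = μn {ω | x < ∑ j : Fin m, ξ (ω (Fin.castLE hmn j)) u} := by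
    have h1 : P {ω | x < ξ ω ((m : ℝ≥0) * u)}
        = Measure.map (fun ω => ξ ω ((m : ℝ≥0) * u)) P (Set.Ioi x) := by
      rw [Measure.map_apply (hmeas _) measurableSet_Ioi]; rfl
    have hsm : Measurable (fun ω : Fin m → Ω => ∑ j, ξ (ω j) u) :=
      Finset.measurable_sum _ fun j _ => (hmeas u).comp (measurable_pi_apply j)
    rw [h1, ← law_sum P hmeas hts m hm u, ← map_restrict_pi P hmn,
      Measure.map_map hsm (measurable_pi_lambda (fun (ω : Fin n → Ω) (j : Fin m) =>
        ω (Fin.castLE hmn j)) fun j => measurable_pi_apply _)]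
    have hcomp : ((fun ω : Fin m → Ω => ∑ j, ξ (ω j) u) ∘
        fun (ω : Fin n → Ω) (j : Fin m) => ω (Fin.castLE hmn j))
        = fun ω : Fin n → Ω => ∑ j : Fin m, ξ (ω (Fin.castLE hmn j)) u := rfl
    rw [hcomp, Measure.map_apply hB_meas measurableSet_Ioi]
    rfl
  rw [hA, hB]
  refine measure_mono_ae ?_
  have hae : ∀ᵐ ω ∂μn, ∀ j : Fin n, 0 ≤ ξ (ω j) u := by
    rw [ae_all_iff]
    intro j
    exact ae_pi_coord P j (measurableSet_le measurable_const (hmeas u)) (hpos u)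
  filter_upwards [hae] with ω hω hx
  refine lt_of_lt_of_le hx ?_
  calc ∑ j : Fin m, ξ (ω (Fin.castLE hmn j)) u
      = ∑ i ∈ Finset.univ.map (Fin.castLEEmb hmn), ξ (ω i) u := by
        rw [Finset.sum_map]; rfl
    _ ≤ ∑ i : Fin n, ξ (ω i) u :=
        Finset.sum_le_sum_of_subset_of_nonneg (Finset.subset_univ _) fun i _ _ => hω i


end Aux

/-- If `ξ` is a (stochastically continuous) time-stable process with
`ξ(t) ≥ 0` a.s. for every `t`, then its one-dimensional distributions increase in the
stochastic order: `P(ξ(s) > x) ≤ P(ξ(t) > x)` whenever `s ≤ t`. -/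
theorem statement12 {Ω : Type*} [MeasurableSpace Ω] (P : Measure Ω) [IsProbabilityMeasure P]
    (ξ : Ω → ℝ≥0 → ℝ) (hmeas : ∀ t : ℝ≥0, Measurable fun ω => ξ ω t)
    (hcont : StochContinuous P ξ) (hts : TimeStable P ξ)
    (hpos : ∀ t : ℝ≥0, ∀ᵐ ω ∂P, 0 ≤ ξ ω t) :
    ∀ s t : ℝ≥0, s ≤ t → ∀ x : ℝ, P {ω | x < ξ ω s} ≤ P {ω | x < ξ ω t} := by
  have hcont' : ∀ t : ℝ≥0, TendstoInMeasure P (fun s ω => ξ ω s) (nhds t) (fun ω => ξ ω t) :=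
    hcont
  intro s t hst x
  rcases eq_or_ne t 0 with rfl | ht0
  · have hs0 : s = 0 := le_antisymm hst zero_le
    simp [hs0]
  set M : ℕ → ℕ := fun n => max 1 ⌈(n : ℝ≥0) * s / t⌉₊ with hM
  set sq : ℕ → ℝ≥0 := fun n => (M n : ℝ≥0) * (t / n) with hsq
  have hMle : ∀ n : ℕ, 1 ≤ n → M n ≤ n := by
    intro n hn
    refine max_le hn (Nat.ceil_le.2 ?_)
    rw [div_le_iff₀ (zero_lt_iff.2 ht0)]
    exact mul_le_mul_right hst _ |>.trans (by rw [mul_comm])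
  have hstep : ∀ n : ℕ, 1 ≤ n → P {ω | x < ξ ω (sq n)} ≤ P {ω | x < ξ ω t} := by
    intro n hn
    have hn0 : (n : ℝ≥0) ≠ 0 := Nat.cast_ne_zero.2 (Nat.one_le_iff_ne_zero.1 hn)
    have := mono_step P hmeas hts hpos (le_max_left 1 _) (hMle n hn) (t / n) x
    rwa [mul_comm (n : ℝ≥0) (t / n), div_mul_cancel₀ t hn0] at this
  -- sq n → s
  have hsq_tendsto : Filter.Tendsto sq Filter.atTop (nhds s) := by
    have hlow : ∀ᶠ n : ℕ in Filter.atTop, s ≤ sq n := by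
      filter_upwards [Filter.eventually_ge_atTop 1] with n hn
      have hn0 : (n : ℝ≥0) ≠ 0 := Nat.cast_ne_zero.2 (Nat.one_le_iff_ne_zero.1 hn)
      have h1 : (n : ℝ≥0) * s / t ≤ (M n : ℝ≥0) :=
        (Nat.le_ceil _).trans (Nat.cast_le.2 (le_max_right 1 _))
      calc s = ((n : ℝ≥0) * s / t) * (t / n) := by
              field_simp
        _ ≤ (M n : ℝ≥0) * (t / n) := mul_le_mul_left h1 _
    have hhigh : ∀ᶠ n : ℕ in Filter.atTop, sq n ≤ s + t / n := by
      filter_upwards [Filter.eventually_ge_atTop 1] with n hn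
      have hn0 : (n : ℝ≥0) ≠ 0 := Nat.cast_ne_zero.2 (Nat.one_le_iff_ne_zero.1 hn)
      have h1 : (M n : ℝ≥0) ≤ (n : ℝ≥0) * s / t + 1 := by
        simp only [hM]
        push_cast [Nat.cast_max]
        refine max_le le_add_self ?_
        exact (Nat.ceil_lt_add_one zero_le).le
      calc sq n ≤ ((n : ℝ≥0) * s / t + 1) * (t / n) := mul_le_mul_left h1 _
        _ = s + t / n := by
            rw [add_mul, one_mul]
            congr 1
            field_simp
    have hlim : Filter.Tendsto (fun n : ℕ => s + t / n) Filter.atTop (nhds s) := by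
      have := (tendsto_const_nhds : Filter.Tendsto (fun _ : ℕ => s) Filter.atTop (nhds s)).add
        (tendsto_const_div_atTop_nhds_zero_nat t)
      simpa using this
    exact tendsto_of_tendsto_of_tendsto_of_le_of_le' tendsto_const_nhds hlim hlow hhigh
  have htim : TendstoInMeasure P (fun n ω => ξ ω (sq n)) Filter.atTop (fun ω => ξ ω s) :=
    fun ε hε => ((hcont' s) ε hε).comp hsq_tendsto
  obtain ⟨ns, hns, hae⟩ := htim.exists_seq_tendsto_ae
  set B : ℕ → Set Ω := fun k => {ω | x < ξ ω (sq (ns k))} with hB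
  set C : ℕ → Set Ω := fun N => ⋂ k, ⋂ (_ : N ≤ k), B k with hC
  have hCmono : Monotone C := by
    intro N N' hNN'
    exact Set.iInter₂_mono' fun k hk => ⟨k, hNN'.trans hk, subset_rfl⟩
  calc P {ω | x < ξ ω s} ≤ P (⋃ N, C N) := by
        refine measure_mono_ae ?_
        filter_upwards [hae] with ω hω hx
        have hev : ∀ᶠ k in Filter.atTop, x < ξ ω (sq (ns k)) :=
          hω.eventually (eventually_gt_nhds hx)
        obtain ⟨N, hN⟩ := Filter.eventually_atTop.1 hev
        exact Set.mem_iUnion.2 ⟨N, Set.mem_iInter₂.2 fun k hk => hN k hk⟩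
    _ = ⨆ N, P (C N) := hCmono.directed_le.measure_iUnion
    _ ≤ P {ω | x < ξ ω t} := by
        refine iSup_le fun N => ?_
        have h1 : C N ⊆ B (N + 1) := fun ω hω => Set.mem_iInter₂.1 hω (N + 1) (Nat.le_succ N)
        refine (measure_mono h1).trans ?_
        exact hstep (ns (N + 1)) ((Nat.succ_le_of_lt (Nat.pos_of_ne_zero (by omega))).trans
          (hns.le_apply))
end
end

section
/- Let ξ be a time-stable process with ξ(t) ≥ 0 almost surely for every t ≥ 0, and suppose ξ is non-degenerate in the sense that P(ξ(t₀) > 0) > 0 for some t₀ > 0. Then the supremum of ξ over the nonnegative rationals is almost surely infinite: P(sup_{q ∈ ℚ, q ≥ 0} ξ(q) = ∞) = 1. -/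
open MeasureTheory ProbabilityTheory
open scoped NNReal ENNReal

noncomputable section

lemma two_copy {Ω : Type*} [MeasurableSpace Ω] (P : Measure Ω) [IsProbabilityMeasure P]
    (ξ : Ω → ℝ≥0 → ℝ) (hmeas : ∀ t : ℝ≥0, Measurable fun ω => ξ ω t)
    (hts : TimeStable P ξ) (t : ℝ≥0) (B : Set ℝ) (hB : MeasurableSet B) :
    P {ω | ξ ω (2 * t) ∈ B}
      = (Measure.pi fun _ : Fin 2 => P) {ω | ξ (ω 0) t + ξ (ω 1) t ∈ B} := by
  have h := hts 2 le_rfl 1 (fun _ => t)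
  have hm1 : Measurable fun (ω : Fin 2 → Ω) (i : Fin 1) => ∑ j, ξ (ω j) t :=
    measurable_pi_lambda _ fun i =>
      Finset.measurable_sum _ fun j _ => (hmeas t).comp (measurable_pi_apply j)
  have hm2 : Measurable fun (ω : Ω) (i : Fin 1) => ξ ω (((2:ℕ) : ℝ≥0) * t) :=
    measurable_pi_lambda _ fun i => hmeas _
  have hBset : MeasurableSet {f : Fin 1 → ℝ | f 0 ∈ B} := (measurable_pi_apply 0) hB
  have h2 := congrArg (fun μ => μ {f : Fin 1 → ℝ | f 0 ∈ B}) h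
  simp only [Measure.map_apply hm1 hBset, Measure.map_apply hm2 hBset] at h2
  have e1 : ((fun (ω : Fin 2 → Ω) (i : Fin 1) => ∑ j, ξ (ω j) (t)) ⁻¹' {f | f 0 ∈ B})
      = {ω : Fin 2 → Ω | ξ (ω 0) t + ξ (ω 1) t ∈ B} := by
    ext ω; simp [Set.mem_preimage, Fin.sum_univ_two]
  have e2 : ((fun (ω : Ω) (i : Fin 1) => ξ ω (((2:ℕ) : ℝ≥0) * t)) ⁻¹' {f | f 0 ∈ B})
      = {ω : Ω | ξ ω (2 * t) ∈ B} := by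
    ext ω; norm_num [Set.mem_preimage]
  rw [e1, e2] at h2
  exact h2.symm

lemma pi_two_same {Ω : Type*} [MeasurableSpace Ω] (P : Measure Ω) [IsProbabilityMeasure P]
    (A : Set Ω) (hA : MeasurableSet A) :
    (Measure.pi fun _ : Fin 2 => P) {ω | ω 0 ∈ A ∧ ω 1 ∈ A} = P A * P A := by
  have e : {ω : Fin 2 → Ω | ω 0 ∈ A ∧ ω 1 ∈ A} = Set.univ.pi (fun _ : Fin 2 => A) := by
    ext ω; simp [Set.mem_pi, Fin.forall_fin_two]
  rw [e, Measure.pi_pi]; simp [Fin.prod_univ_two, sq]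

lemma surv_sq {Ω : Type*} [MeasurableSpace Ω] (P : Measure Ω) [IsProbabilityMeasure P]
    (ξ : Ω → ℝ≥0 → ℝ) (hmeas : ∀ t : ℝ≥0, Measurable fun ω => ξ ω t)
    (hts : TimeStable P ξ) (t : ℝ≥0) (a : ℝ) :
    P {ω | a < ξ ω t} * P {ω | a < ξ ω t} ≤ P {ω | a + a < ξ ω (2 * t)} := by
  have h := two_copy P ξ hmeas hts t (Set.Ioi (a + a)) measurableSet_Ioi
  have hA : MeasurableSet {ω : Ω | a < ξ ω t} := measurableSet_lt measurable_const (hmeas t)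
  have e : {ω : Ω | a + a < ξ ω (2 * t)} = {ω | ξ ω (2 * t) ∈ Set.Ioi (a + a)} := rfl
  rw [e, h, ← pi_two_same P _ hA]
  refine measure_mono fun ω hω => ?_
  exact show a + a < ξ (ω 0) t + ξ (ω 1) t from add_lt_add hω.1 hω.2

lemma cdf_sq {Ω : Type*} [MeasurableSpace Ω] (P : Measure Ω) [IsProbabilityMeasure P]
    (ξ : Ω → ℝ≥0 → ℝ) (hmeas : ∀ t : ℝ≥0, Measurable fun ω => ξ ω t)
    (hts : TimeStable P ξ) (hpos : ∀ t : ℝ≥0, ∀ᵐ ω ∂P, 0 ≤ ξ ω t) (t : ℝ≥0) (M : ℝ) :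
    P {ω | ξ ω (2 * t) ≤ M} ≤ P {ω | ξ ω t ≤ M} * P {ω | ξ ω t ≤ M} := by
  have h := two_copy P ξ hmeas hts t (Set.Iic M) measurableSet_Iic
  have hA : MeasurableSet {ω : Ω | ξ ω t ≤ M} := measurableSet_le (hmeas t) measurable_const
  have e : {ω : Ω | ξ ω (2 * t) ≤ M} = {ω | ξ ω (2 * t) ∈ Set.Iic M} := rfl
  rw [e, h, ← pi_two_same P _ hA]
  apply measure_mono_ae
  have key : ∀ i : Fin 2, ∀ᵐ ω ∂(Measure.pi fun _ : Fin 2 => P), 0 ≤ ξ (ω i) t := by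
    intro i
    have h := (Measure.tendsto_eval_ae_ae (μ := fun _ : Fin 2 => P) (i := i)).eventually
      (p := fun x => 0 ≤ ξ x t) (hpos t)
    filter_upwards [h] with ω hω using hω
  have h0 := key 0
  have h1 := key 1
  filter_upwards [h0, h1] with ω hω0 hω1 hsum
  exact ⟨le_trans (le_add_of_nonneg_right hω1) hsum, le_trans (le_add_of_nonneg_left hω0) hsum⟩

lemma small_tail {Ω : Type*} [MeasurableSpace Ω] (P : Measure Ω) [IsProbabilityMeasure P]
    (ξ : Ω → ℝ≥0 → ℝ) (hmeas : ∀ t : ℝ≥0, Measurable fun ω => ξ ω t)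
    (hts : TimeStable P ξ) (hpos : ∀ t : ℝ≥0, ∀ᵐ ω ∂P, 0 ≤ ξ ω t)
    (t₀ : ℝ≥0) (hnd : 0 < P {ω | 0 < ξ ω t₀}) (M : ℝ) (ε : ℝ≥0∞) (hε : 0 < ε) :
    ∃ t : ℝ≥0, P {ω | ξ ω t ≤ M} < ε := by
  -- find δ > 0 with P {δ < ξ t₀} > 0
  obtain ⟨δ, hδ, hsδ⟩ : ∃ δ : ℝ, 0 < δ ∧ 0 < P {ω | δ < ξ ω t₀} := by
    by_contra hcon
    push_neg at hcon
    have hnull : ∀ n : ℕ, P {ω | 1 / (n + 1 : ℝ) < ξ ω t₀} = 0 := fun n =>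
      le_antisymm (hcon _ (by positivity)) zero_le
    have hsub : {ω | 0 < ξ ω t₀} ⊆ ⋃ n : ℕ, {ω | 1 / (n + 1 : ℝ) < ξ ω t₀} := by
      intro ω hω
      obtain ⟨n, hn⟩ := exists_nat_one_div_lt (show (0:ℝ) < ξ ω t₀ from hω)
      exact Set.mem_iUnion.2 ⟨n, hn⟩
    exact absurd (measure_mono_null hsub (measure_iUnion_null hnull)) hnd.ne'
  -- survival along doublings stays positive
  have hsurv : ∀ k : ℕ, 0 < P {ω | (2:ℝ) ^ k * δ < ξ ω ((2:ℝ≥0) ^ k * t₀)} := by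
    intro k
    induction k with
    | zero => simpa using hsδ
    | succ k ih =>
      have h := surv_sq P ξ hmeas hts ((2:ℝ≥0) ^ k * t₀) ((2:ℝ) ^ k * δ)
      have e1 : (2:ℝ≥0) ^ (k+1) * t₀ = 2 * ((2:ℝ≥0) ^ k * t₀) := by ring
      have e2 : (2:ℝ) ^ (k+1) * δ = (2:ℝ) ^ k * δ + (2:ℝ) ^ k * δ := by ring
      rw [e1, e2]
      exact lt_of_lt_of_le (ENNReal.mul_pos ih.ne' ih.ne') h
  -- choose k with M < 2^k δ
  obtain ⟨k, hk⟩ : ∃ k : ℕ, M < (2:ℝ) ^ k * δ := by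
    obtain ⟨k, hk⟩ := pow_unbounded_of_one_lt (R := ℝ) (M / δ) one_lt_two
    exact ⟨k, (div_lt_iff₀ hδ).1 hk⟩
  set c : ℝ≥0∞ := P {ω | ξ ω ((2:ℝ≥0) ^ k * t₀) ≤ M} with hc
  have hc1 : c < 1 := by
    have hdisj : Disjoint {ω : Ω | ξ ω ((2:ℝ≥0) ^ k * t₀) ≤ M}
        {ω | (2:ℝ) ^ k * δ < ξ ω ((2:ℝ≥0) ^ k * t₀)} := by
      rw [Set.disjoint_left]
      intro ω h1 h2
      exact absurd (lt_of_lt_of_le (lt_of_lt_of_le hk (le_of_lt h2)) h1) (lt_irrefl M).elim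
    have hsum : c + P {ω | (2:ℝ) ^ k * δ < ξ ω ((2:ℝ≥0) ^ k * t₀)} ≤ 1 := by
      rw [← measure_union hdisj (measurableSet_lt measurable_const (hmeas _))]
      exact prob_le_one
    calc c < c + P {ω | (2:ℝ) ^ k * δ < ξ ω ((2:ℝ≥0) ^ k * t₀)} :=
            ENNReal.lt_add_right (lt_of_le_of_lt prob_le_one ENNReal.one_lt_top).ne
              (hsurv k).ne'
      _ ≤ 1 := hsum
  -- iterate cdf squaring
  have hiter : ∀ j : ℕ, P {ω | ξ ω ((2:ℝ≥0) ^ (k + j) * t₀) ≤ M} ≤ c ^ (2 ^ j) := by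
    intro j
    induction j with
    | zero => simpa using le_of_eq hc.symm
    | succ j ih =>
      have e1 : (2:ℝ≥0) ^ (k + (j+1)) * t₀ = 2 * ((2:ℝ≥0) ^ (k + j) * t₀) := by ring
      rw [e1]
      calc P {ω | ξ ω (2 * ((2:ℝ≥0) ^ (k + j) * t₀)) ≤ M}
          ≤ P {ω | ξ ω ((2:ℝ≥0) ^ (k + j) * t₀) ≤ M}
            * P {ω | ξ ω ((2:ℝ≥0) ^ (k + j) * t₀) ≤ M} :=
            cdf_sq P ξ hmeas hts hpos _ M
        _ ≤ c ^ (2 ^ j) * c ^ (2 ^ j) := mul_le_mul' ih ih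
        _ = c ^ (2 ^ (j+1)) := by rw [← pow_add]; ring_nf
  obtain ⟨n, hn⟩ : ∃ n, c ^ n < ε :=
    ((ENNReal.tendsto_pow_atTop_nhds_zero_of_lt_one hc1).eventually
      (Filter.eventually_mem_set.mpr (Iio_mem_nhds hε))).exists
  refine ⟨(2:ℝ≥0) ^ (k + n) * t₀, lt_of_le_of_lt (hiter n) (lt_of_le_of_lt ?_ hn)⟩
  exact pow_le_pow_right_of_le_one' hc1.le (Nat.lt_two_pow_self (n := n)).le

/-- If `ξ` is a (stochastically continuous) time-stable process with
`ξ(t) ≥ 0` a.s. for every `t`, and `P(ξ(t₀) > 0) > 0` for some `t₀ > 0`, then the supremum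
of `ξ` over the nonnegative rationals is a.s. infinite (i.e. a.s. unbounded above). -/
theorem statement13 {Ω : Type*} [MeasurableSpace Ω] (P : Measure Ω) [IsProbabilityMeasure P]
    (ξ : Ω → ℝ≥0 → ℝ) (hmeas : ∀ t : ℝ≥0, Measurable fun ω => ξ ω t)
    (hcont : StochContinuous P ξ) (hts : TimeStable P ξ)
    (hpos : ∀ t : ℝ≥0, ∀ᵐ ω ∂P, 0 ≤ ξ ω t)
    (hnd : ∃ t₀ : ℝ≥0, 0 < t₀ ∧ 0 < P {ω | 0 < ξ ω t₀}) :
    P {ω | ¬ BddAbove (Set.range fun q : ℚ≥0 => ξ ω (q : ℝ≥0))} = 1 := by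
  obtain ⟨t₀, -, hnd⟩ := hnd
  have hG : ∀ M : ℕ, P {ω | ∀ q : ℚ≥0, ξ ω (q : ℝ≥0) ≤ (M : ℝ)} = 0 := by
    intro M
    by_contra hne
    set ε := P {ω | ∀ q : ℚ≥0, ξ ω (q : ℝ≥0) ≤ (M : ℝ)} with hεdef
    have hhalf : 0 < ε / 2 := ENNReal.half_pos hne
    obtain ⟨t, ht⟩ := small_tail P ξ hmeas hts hpos t₀ hnd ((M : ℝ) + 1) (ε / 2) hhalf
    have hev : ∀ᶠ s in nhds t, P {ω | 1 ≤ dist (ξ ω s) (ξ ω t)} < ε / 2 := by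
      have h := (hcont t 1 one_pos).eventually (Filter.eventually_mem_set.mpr (Iio_mem_nhds hhalf))
      filter_upwards [h] with s hs
      have e : {ω | 1 ≤ dist (ξ ω s) (ξ ω t)} = {ω | (1:ℝ≥0∞) ≤ edist (ξ ω s) (ξ ω t)} := by
        ext ω; simp only [Set.mem_setOf_eq, edist_dist, ENNReal.one_le_ofReal]
      rw [e]; exact hs
    rw [Metric.eventually_nhds_iff] at hev
    obtain ⟨η, hη, hball⟩ := hev
    obtain ⟨r, hr1, hr2⟩ := exists_rat_btwn (show (t : ℝ) < (t : ℝ) + η by linarith)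
    have hr0 : (0 : ℚ) ≤ r := by
      have := t.coe_nonneg; exact_mod_cast le_of_lt (lt_of_le_of_lt this hr1)
    set q : ℚ≥0 := Rat.toNNRat r with hqdef
    have hq : ((q : ℝ≥0) : ℝ) = (r : ℝ) := by
      have h1 : ((q : ℚ) : ℝ) = (r : ℝ) := by exact_mod_cast Rat.coe_toNNRat r hr0
      rw [← h1]; norm_cast
    have hdq : dist ((q : ℝ≥0)) t < η := by
      rw [NNReal.dist_eq, hq, abs_lt]; constructor <;> linarith
    have hmq := hball hdq
    have hsub : {ω | ∀ q' : ℚ≥0, ξ ω (q' : ℝ≥0) ≤ (M : ℝ)} ⊆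
        {ω | ξ ω t ≤ (M : ℝ) + 1} ∪ {ω | 1 ≤ dist (ξ ω (q : ℝ≥0)) (ξ ω t)} := by
      intro ω hω
      by_cases hd : 1 ≤ dist (ξ ω (q : ℝ≥0)) (ξ ω t)
      · exact Or.inr hd
      · left
        push_neg at hd
        rw [Real.dist_eq, abs_lt] at hd
        have := hω q
        show ξ ω t ≤ (M : ℝ) + 1
        linarith [hd.1]
    have hlt : ε < ε := by
      calc ε ≤ P ({ω | ξ ω t ≤ (M : ℝ) + 1} ∪ {ω | 1 ≤ dist (ξ ω (q : ℝ≥0)) (ξ ω t)}) :=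
            measure_mono hsub
        _ ≤ P {ω | ξ ω t ≤ (M : ℝ) + 1} + P {ω | 1 ≤ dist (ξ ω (q : ℝ≥0)) (ξ ω t)} :=
            measure_union_le _ _
        _ < ε / 2 + ε / 2 := ENNReal.add_lt_add ht hmq
        _ = ε := ENNReal.add_halves ε
    exact absurd hlt (lt_irrefl ε)
  have hB : P {ω | BddAbove (Set.range fun q : ℚ≥0 => ξ ω (q : ℝ≥0))} = 0 := by
    refine measure_mono_null ?_ (measure_iUnion_null hG)
    intro ω hω
    obtain ⟨b, hb⟩ := hω
    obtain ⟨M, hM⟩ := exists_nat_ge b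
    exact Set.mem_iUnion.2 ⟨M, fun q' => le_trans (hb ⟨q', rfl⟩) hM⟩
  refine le_antisymm prob_le_one ?_
  calc (1 : ℝ≥0∞) = P Set.univ := measure_univ.symm
    _ ≤ P ({ω | ¬ BddAbove (Set.range fun q : ℚ≥0 => ξ ω (q : ℝ≥0))}
          ∪ {ω | BddAbove (Set.range fun q : ℚ≥0 => ξ ω (q : ℝ≥0))}) := by
        refine measure_mono fun ω _ => ?_
        by_cases h : BddAbove (Set.range fun q' : ℚ≥0 => ξ ω (q' : ℝ≥0))
        · exact Or.inr h
        · exact Or.inl h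
    _ ≤ P {ω | ¬ BddAbove (Set.range fun q : ℚ≥0 => ξ ω (q : ℝ≥0))}
          + P {ω | BddAbove (Set.range fun q : ℚ≥0 => ξ ω (q : ℝ≥0))} := measure_union_le _ _
    _ = P {ω | ¬ BddAbove (Set.range fun q : ℚ≥0 => ξ ω (q : ℝ≥0))} := by rw [hB, add_zero]
end
end

section
/- Let ξ be a time-stable process, let c₁,…,c_m ∈ ℝ and s₁,…,s_m ≥ 0. Then the process η(t) = ∑_{i=1}^m cᵢ ξ(t sᵢ), t ≥ 0, is time-stable: η is stochastically continuous and for every n ≥ 2 the sum of n independent copies of η has the same finite-dimensional distributions as n∘η. -/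
open MeasureTheory ProbabilityTheory Filter
open scoped NNReal ENNReal

noncomputable section

section Helpers

variable {Ω ι : Type*} [MeasurableSpace Ω] {P : Measure Ω} {l : Filter ι}

theorem tim_add {f g : ι → Ω → ℝ} {F G : Ω → ℝ}
    (hf : TendstoInMeasure P f l F) (hg : TendstoInMeasure P g l G) :
    TendstoInMeasure P (fun i ω => f i ω + g i ω) l (fun ω => F ω + G ω) := by
  rw [tendstoInMeasure_iff_dist] at *
  intro ε hε
  have key : ∀ i, P {ω | ε ≤ dist (f i ω + g i ω) (F ω + G ω)}
      ≤ P {ω | ε/2 ≤ dist (f i ω) (F ω)} + P {ω | ε/2 ≤ dist (g i ω) (G ω)} := by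
    intro i
    refine le_trans (measure_mono ?_) (measure_union_le _ _)
    intro ω hω
    by_contra hc
    simp only [Set.mem_union, Set.mem_setOf_eq, not_or, not_le] at hc
    have := dist_add_add_le (f i ω) (g i ω) (F ω) (G ω)
    simp only [Set.mem_setOf_eq] at hω
    linarith [hω.trans this, hc.1, hc.2]
  have h0 : Tendsto (fun i => P {ω | ε/2 ≤ dist (f i ω) (F ω)}
      + P {ω | ε/2 ≤ dist (g i ω) (G ω)}) l (nhds 0) := by
    have := Filter.Tendsto.add (hf (ε/2) (by linarith)) (hg (ε/2) (by linarith))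
    simpa using this
  exact tendsto_of_tendsto_of_tendsto_of_le_of_le tendsto_const_nhds h0
    (fun i => zero_le) key

theorem tim_const_mul (c : ℝ) {f : ι → Ω → ℝ} {F : Ω → ℝ}
    (hf : TendstoInMeasure P f l F) :
    TendstoInMeasure P (fun i ω => c * f i ω) l (fun ω => c * F ω) := by
  rw [tendstoInMeasure_iff_dist] at *
  rcases eq_or_ne c 0 with rfl | hc
  · intro ε hε
    simpa [dist_self, not_le.2 hε] using
      (tendsto_const_nhds : Tendsto (fun _ : ι => (0:ENNReal)) l (nhds 0))
  · intro ε hε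
    have h := hf (ε / |c|) (div_pos hε (abs_pos.2 hc))
    refine h.congr (fun i => ?_)
    congr 1
    ext ω
    simp only [Set.mem_setOf_eq, Real.dist_eq]
    rw [← mul_sub, abs_mul, div_le_iff₀' (abs_pos.2 hc)]

theorem tim_comp {f : ι → Ω → ℝ} {F : Ω → ℝ} {l' : Filter ι} {κ : Type*} {u : Filter κ}
    {φ : κ → ι} (hf : TendstoInMeasure P f l' F) (hφ : Tendsto φ u l') :
    TendstoInMeasure P (fun k => f (φ k)) u F :=
  fun ε hε => (hf ε hε).comp hφ

theorem tim_const (a : Ω → ℝ) :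
    TendstoInMeasure P (fun _ : ι => a) l a := by
  rw [tendstoInMeasure_iff_dist]
  intro ε hε
  simpa [dist_self, not_le.2 hε] using
    (tendsto_const_nhds : Tendsto (fun _ : ι => (0:ENNReal)) l (nhds 0))

theorem tim_sum {J : Type*} (I : Finset J) (f : J → ι → Ω → ℝ) (F : J → Ω → ℝ)
    (h : ∀ j ∈ I, TendstoInMeasure P (f j) l (F j)) :
    TendstoInMeasure P (fun i ω => ∑ j ∈ I, f j i ω) l (fun ω => ∑ j ∈ I, F j ω) := by
  classical
  induction I using Finset.induction with
  | empty => simpa using tim_const (P := P) (l := l) (fun _ => (0:ℝ))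
  | @insert j I' hj ih =>
    simp only [Finset.sum_insert hj]
    exact tim_add (h j (Finset.mem_insert_self _ _))
      (ih fun j' hj' => h j' (Finset.mem_insert_of_mem hj'))

end Helpers

set_option maxHeartbeats 1000000 in
/-- If `ξ` is a (stochastically continuous) time-stable process,
`c₁,…,c_m ∈ ℝ` and `s₁,…,s_m ≥ 0`, then `η(t) = ∑ᵢ cᵢ ξ(t sᵢ)` is time-stable:
it is stochastically continuous and satisfies the time-stability identity. -/
theorem statement15 {Ω : Type*} [MeasurableSpace Ω] (P : Measure Ω) [IsProbabilityMeasure P]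
    (ξ : Ω → ℝ≥0 → ℝ) (hmeas : ∀ t : ℝ≥0, Measurable fun ω => ξ ω t)
    (hcont : StochContinuous P ξ) (hts : TimeStable P ξ)
    (m : ℕ) (c : Fin m → ℝ) (s : Fin m → ℝ≥0) :
    StochContinuous P (fun ω t => ∑ i, c i * ξ ω (t * s i)) ∧
    TimeStable P (fun ω t => ∑ i, c i * ξ ω (t * s i)) := by
  constructor
  · -- stochastic continuity
    intro t
    refine tim_sum Finset.univ
      (fun i => fun u ω => c i * ξ ω (u * s i)) (fun i ω => c i * ξ ω (t * s i))
      (fun i _ => ?_)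
    refine tim_const_mul (c i) ?_
    have hφ : Filter.Tendsto (fun u : ℝ≥0 => u * s i) (nhds t) (nhds (t * s i)) :=
      Filter.Tendsto.mul_const (s i) tendsto_id
    exact tim_comp (f := fun s ω => ξ ω s) (φ := fun u : ℝ≥0 => u * s i) (hcont (t * s i)) hφ
  · -- time stability
    intro n hn k t
    set e : Fin k × Fin m ≃ Fin (k * m) := finProdFinEquiv
    set t' : Fin (k * m) → ℝ≥0 := fun q => t (e.symm q).1 * s (e.symm q).2 with ht'
    set g : (Fin (k * m) → ℝ) → (Fin k → ℝ) :=
      fun x i => ∑ i', c i' * x (e (i, i')) with hg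
    have hgm : Measurable g :=
      measurable_pi_lambda _ fun i =>
        Finset.measurable_sum _ fun i' _ => measurable_const.mul (measurable_pi_apply (e (i, i')))
    have hF1 : Measurable (fun (ω : Fin n → Ω) (q : Fin (k * m)) => ∑ j, ξ (ω j) (t' q)) :=
      measurable_pi_lambda _ fun q =>
        Finset.measurable_sum _ fun j _ => (hmeas (t' q)).comp (measurable_pi_apply j)
    have hF2 : Measurable (fun (ω : Ω) (q : Fin (k * m)) => ξ ω ((n : ℝ≥0) * t' q)) :=
      measurable_pi_lambda _ fun q => hmeas _
    have key := hts n hn (k * m) t'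
    have hL : (fun (ω : Fin n → Ω) (i : Fin k) =>
          ∑ j, ∑ i', c i' * ξ (ω j) (t i * s i'))
        = g ∘ (fun ω q => ∑ j, ξ (ω j) (t' q)) := by
      funext ω
      funext i
      simp only [Function.comp, hg, ht', Finset.mul_sum]
      rw [Finset.sum_comm]
      simp [e]
    have hR : (fun (ω : Ω) (i : Fin k) =>
          ∑ i', c i' * ξ ω ((n : ℝ≥0) * t i * s i'))
        = g ∘ (fun ω q => ξ ω ((n : ℝ≥0) * t' q)) := by
      funext ω
      funext i
      simp only [Function.comp, hg, ht']
      congr 1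
      funext i'
      simp [e, mul_assoc]
    show Measure.map (fun (ω : Fin n → Ω) (i : Fin k) => ∑ j, ∑ i', c i' * ξ (ω j) (t i * s i')) (Measure.pi fun _ : Fin n => P)
        = Measure.map (fun (ω : Ω) (i : Fin k) => ∑ i', c i' * ξ ω ((n : ℝ≥0) * t i * s i')) P
    rw [hL, hR, ← Measure.map_map hgm hF1, ← Measure.map_map hgm hF2, key]
end
end
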